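/- arXiv:1203.4188 — 7 statements merged into one kernel-verified Lean document; each statement's English description precedes it below -/
import Mathlib

section
/- If A ≤ B in the compression order on r-subsets of [n] (i.e., the i-th smallest element of A is at most the i-th smallest element of B for all i), then A can be obtained from B by a finite sequence of ij-compressions C_{ij} with i < j. -/
open Finset

/-- The ij-compression of a finite set: replace j by i if possible. -/
def comp (i j : ℕ) (A : Finset ℕ) : Finset ℕ :=
  if j ∈ A ∧ i ∉ A then insert i (A.erase j) else A

/-- The ij-compression of a family of sets. -/
def compFam (i j : ℕ) (𝒜 : Finset (Finset ℕ)) : Finset (Finset ℕ) :=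
  (𝒜.filter (fun A => comp i j A ∈ 𝒜)) ∪
    ((𝒜.filter (fun A => comp i j A ∉ 𝒜)).image (comp i j))

/-- A family is intersecting if any two members meet. -/
def IsIntersecting (𝒜 : Finset (Finset ℕ)) : Prop :=
  ∀ A ∈ 𝒜, ∀ B ∈ 𝒜, (A ∩ B).Nonempty

/-- A family is left-compressed if it is invariant under all ij-compressions, i < j. -/
def LeftCompressed (𝒜 : Finset (Finset ℕ)) : Prop :=
  ∀ i j : ℕ, 1 ≤ i → i < j → compFam i j 𝒜 = 𝒜

/-- The compression order: same size and the k-th smallest element of `A` is at most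
the k-th smallest element of `B`. -/
def domLE (A B : Finset ℕ) : Prop :=
  A.card = B.card ∧ ∀ (k : ℕ) (a b : ℕ), (A.sort (· ≤ ·))[k]? = some a →
    (B.sort (· ≤ ·))[k]? = some b → a ≤ b

/-- `A ≺ G` : `A` is generated by `G`, i.e. `|G| ≤ |A|` and the k-th smallest element
of `A` is at most the k-th smallest element of `G` for `k ≤ |G|`. -/
def prec (A G : Finset ℕ) : Prop :=
  G.card ≤ A.card ∧ ∀ (k : ℕ) (a g : ℕ), (A.sort (· ≤ ·))[k]? = some a →
    (G.sort (· ≤ ·))[k]? = some g → a ≤ g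

/-- The r-element subsets of [n] = {1, ..., n}. -/
def uniformOn (n r : ℕ) : Finset (Finset ℕ) := (Icc 1 n).powersetCard r

/-- The family ⟨𝒢⟩_r^n generated by 𝒢 under inclusion. -/
def genSub (r n : ℕ) (𝒢 : Finset (Finset ℕ)) : Finset (Finset ℕ) :=
  (uniformOn n r).filter (fun A => ∃ G ∈ 𝒢, G ⊆ A)

open Classical in
/-- The family ⟨𝒢⟩_r^n generated by 𝒢 under ≺. -/
noncomputable def genP (r n : ℕ) (𝒢 : Finset (Finset ℕ)) : Finset (Finset ℕ) :=
  (uniformOn n r).filter (fun A => ∃ G ∈ 𝒢, prec A G)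

/-- ℱ(X) : the members of ℱ meeting X. -/
def hitting (ℱ : Finset (Finset ℕ)) (X : Finset ℕ) : Finset (Finset ℕ) :=
  ℱ.filter (fun A => (A ∩ X).Nonempty)

/-- The star at 1 in [n]^(r). -/
def star (n r : ℕ) : Finset (Finset ℕ) := (uniformOn n r).filter (fun A => 1 ∈ A)

/-- A maximal left-compressed intersecting subfamily of [n]^(r). -/
def MaxLCI (n r : ℕ) (𝒜 : Finset (Finset ℕ)) : Prop :=
  𝒜 ⊆ uniformOn n r ∧ LeftCompressed 𝒜 ∧ IsIntersecting 𝒜 ∧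
    ∀ B ∈ uniformOn n r, B ∉ 𝒜 → ¬ IsIntersecting (insert B 𝒜)

/-- X is good for n and r. -/
def IsGood (n r : ℕ) (X : Finset ℕ) : Prop :=
  ∀ 𝒜 ⊆ uniformOn n r, LeftCompressed 𝒜 → IsIntersecting 𝒜 →
    (hitting 𝒜 X).card ≤ (hitting (star n r) X).card

lemma step_lemma (la lb : List ℕ) (hla : la.Pairwise (· < ·)) (hlb : lb.Pairwise (· < ·))
    (hlen : la.length = lb.length)
    (hle : ∀ (k : ℕ) (h1 : k < la.length) (h2 : k < lb.length), la.get ⟨k, h1⟩ ≤ lb.get ⟨k, h2⟩)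
    (hne : la ≠ lb) :
    ∃ (i j : ℕ) (lb' : List ℕ), i < j ∧ lb'.Pairwise (· < ·) ∧ la.length = lb'.length ∧
      (∀ (k : ℕ) (h1 : k < la.length) (h2 : k < lb'.length), la.get ⟨k, h1⟩ ≤ lb'.get ⟨k, h2⟩) ∧
      lb'.sum < lb.sum ∧ comp i j lb.toFinset = lb'.toFinset := by
  have hex : ∃ k : ℕ, la[k]? ≠ lb[k]? := by
    by_contra hc
    push_neg at hc
    exact hne (List.ext_getElem? hc)
  classical
  set k := Nat.find hex with hkdef
  have hk : la[k]? ≠ lb[k]? := Nat.find_spec hex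
  have hmin : ∀ m, m < k → la[m]? = lb[m]? := fun m hm => by
    have := Nat.find_min hex hm
    simpa using this
  have h1 : k < la.length := by
    by_contra h1
    push_neg at h1
    have h2 : lb.length ≤ k := hlen ▸ h1
    rw [List.getElem?_eq_none h1, List.getElem?_eq_none h2] at hk
    exact hk rfl
  have h2 : k < lb.length := hlen ▸ h1
  set a := la.get ⟨k, h1⟩ with hadef
  set b := lb.get ⟨k, h2⟩ with hbdef
  have hab : a ≠ b := by
    intro hab
    rw [List.getElem?_eq_getElem h1, List.getElem?_eq_getElem h2] at hk
    exact hk (congrArg some hab)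
  have haltb : a < b := lt_of_le_of_ne (hle k h1 h2) hab
  have hminget : ∀ (m : ℕ) (hm : m < k), la.get ⟨m, hm.trans h1⟩ = lb.get ⟨m, hm.trans h2⟩ := by
    intro m hm
    have := hmin m hm
    rw [List.getElem?_eq_getElem (hm.trans h1), List.getElem?_eq_getElem (hm.trans h2)] at this
    exact Option.some_injective _ this
  have hanotb : a ∉ lb := by
    intro hmem
    obtain ⟨m, hma⟩ := List.mem_iff_get.1 hmem
    rcases lt_or_ge m.1 k with hmk | hmk
    · have := hminget m.1 hmk
      have hlt : la.get ⟨m.1, hmk.trans h1⟩ < a := hla.sortedLT.strictMono_get (show (⟨m.1, _⟩ : Fin _) < ⟨k, h1⟩ from hmk)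
      rw [this] at hlt
      simp only [Fin.eta] at hlt
      omega
    · have : b ≤ lb.get m :=
        hlb.sortedLT.strictMono_get.monotone (show (⟨k, h2⟩ : Fin _) ≤ m from hmk)
      rw [hma] at this
      omega
  have hbinb : b ∈ lb := List.get_mem lb ⟨k, h2⟩
  refine ⟨a, b, lb.set k a, haltb, ?_, ?_, ?_, ?_, ?_⟩
  · -- sorted
    rw [List.pairwise_iff_get]
    intro i j hij
    have hi : i.1 < lb.length := by simpa using i.2
    have hj : j.1 < lb.length := by simpa using j.2
    have geti : (lb.set k a).get i = if k = i.1 then a else lb.get ⟨i.1, hi⟩ := by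
      simp [List.get_eq_getElem, List.getElem_set]
    have getj : (lb.set k a).get j = if k = j.1 then a else lb.get ⟨j.1, hj⟩ := by
      simp [List.get_eq_getElem, List.getElem_set]
    rw [geti, getj]
    have hij' : i.1 < j.1 := hij
    split_ifs with e1 e2 e2
    · omega
    · -- i = k < j
      have : b < lb.get ⟨j.1, hj⟩ := hlb.sortedLT.strictMono_get (show (⟨k, h2⟩ : Fin _) < ⟨j.1, hj⟩ from by simp [Fin.lt_def]; omega)
      omega
    · -- i < j = k
      have hik : i.1 < k := by omega
      have := hminget i.1 hik
      have hlt : la.get ⟨i.1, hik.trans h1⟩ < a := hla.sortedLT.strictMono_get (show (⟨i.1, _⟩ : Fin _) < ⟨k, h1⟩ from hik)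
      rw [this] at hlt
      exact hlt
    · exact hlb.sortedLT.strictMono_get (show (⟨i.1, hi⟩ : Fin _) < ⟨j.1, hj⟩ from hij')
  · simpa using hlen
  · -- pointwise
    intro m hm1 hm2
    have hm : m < lb.length := by simpa using hm2
    have : (lb.set k a).get ⟨m, hm2⟩ = if k = m then a else lb.get ⟨m, hm⟩ := by
      simp [List.get_eq_getElem, List.getElem_set]
    rw [this]
    split_ifs with e
    · subst e; exact le_refl _
    · exact hle m hm1 hm
  · -- sum decreases
    have e1 : lb.set k a = lb.take k ++ a :: lb.drop (k + 1) := by rw [List.set_eq_take_append_cons_drop, if_pos h2]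
    have e2 : lb = lb.take k ++ b :: lb.drop (k + 1) := by
      conv_lhs => rw [← List.take_append_drop k lb]
      congr 1
      exact List.drop_eq_getElem_cons h2
    rw [e1]
    conv_rhs => rw [e2]
    simp [List.sum_append]
    omega
  · -- comp equality
    have hbF : b ∈ lb.toFinset := List.mem_toFinset.2 hbinb
    have haF : a ∉ lb.toFinset := fun h => hanotb (List.mem_toFinset.1 h)
    rw [comp, if_pos ⟨hbF, haF⟩]
    ext x
    simp only [Finset.mem_insert, Finset.mem_erase, List.mem_toFinset]
    constructor
    · rintro (rfl | ⟨hxb, hxlb⟩)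
      · exact List.mem_iff_get.2 ⟨⟨k, by simpa using h2⟩, by simp [List.get_eq_getElem, List.getElem_set]⟩
      · obtain ⟨m, hm⟩ := List.mem_iff_get.1 hxlb
        have hmk : m.1 ≠ k := by
          intro e
          apply hxb
          rw [← hm, hbdef]
          congr 1
          exact Fin.ext e
        refine List.mem_iff_get.2 ⟨⟨m.1, by simpa using m.2⟩, ?_⟩
        simp [List.get_eq_getElem, List.getElem_set, Ne.symm hmk]
        rw [← hm]
        rfl
    · intro hx
      obtain ⟨m, hm⟩ := List.mem_iff_get.1 hx
      have hm' : m.1 < lb.length := by simpa using m.2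
      have : (lb.set k a).get m = if k = m.1 then a else lb.get ⟨m.1, hm'⟩ := by
        simp [List.get_eq_getElem, List.getElem_set]
      rw [this] at hm
      split_ifs at hm with e
      · left; exact hm.symm
      · right
        refine ⟨?_, hm ▸ List.get_mem lb ⟨m.1, hm'⟩⟩
        rw [← hm, hbdef]
        intro hcon
        have := hlb.sortedLT.strictMono_get.injective hcon
        exact e (congrArg Fin.val this).symm

lemma chain_lemma : ∀ (N : ℕ) (la lb : List ℕ), lb.sum ≤ N →
    la.Pairwise (· < ·) → lb.Pairwise (· < ·) → la.length = lb.length →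
    (∀ (k : ℕ) (h1 : k < la.length) (h2 : k < lb.length), la.get ⟨k, h1⟩ ≤ lb.get ⟨k, h2⟩) →
    ∃ L : List (ℕ × ℕ), (∀ p ∈ L, p.1 < p.2) ∧
      L.foldl (fun S p => comp p.1 p.2 S) lb.toFinset = la.toFinset := by
  intro N
  induction N with
  | zero =>
    intro la lb hsum hla hlb hlen hle
    by_cases hne : la = lb
    · exact ⟨[], by simp, by simp [hne]⟩
    · obtain ⟨i, j, lb', hij, _, _, _, hsum', _⟩ := step_lemma la lb hla hlb hlen hle hne
      omega
  | succ N ih =>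
    intro la lb hsum hla hlb hlen hle
    by_cases hne : la = lb
    · exact ⟨[], by simp, by simp [hne]⟩
    · obtain ⟨i, j, lb', hij, hs', hlen', hle', hsum', hcomp⟩ :=
        step_lemma la lb hla hlb hlen hle hne
      obtain ⟨L, hL1, hL2⟩ := ih la lb' (by omega) hla hs' hlen' hle'
      refine ⟨(i, j) :: L, ?_, ?_⟩
      · intro p hp
        rcases List.mem_cons.1 hp with rfl | hp
        · exact hij
        · exact hL1 _ hp
      · simp only [List.foldl_cons]
        rw [hcomp]
        exact hL2

theorem stmt0 (n r : ℕ) (A B : Finset ℕ) (hA : A ∈ uniformOn n r)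
    (hB : B ∈ uniformOn n r) (h : domLE A B) :
    ∃ L : List (ℕ × ℕ), (∀ p ∈ L, p.1 < p.2) ∧
      L.foldl (fun S p => comp p.1 p.2 S) B = A := by
  obtain ⟨hcard, hget⟩ := h
  have hlen : (A.sort (· ≤ ·)).length = (B.sort (· ≤ ·)).length := by
    simp [Finset.length_sort, hcard]
  obtain ⟨L, h1, h2⟩ := chain_lemma ((B.sort (· ≤ ·)).sum) (A.sort (· ≤ ·)) (B.sort (· ≤ ·))
    le_rfl (Finset.sortedLT_sort A).pairwise (Finset.sortedLT_sort B).pairwise hlen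
    (fun k hk1 hk2 => hget k _ _ (List.getElem?_eq_getElem hk1) (List.getElem?_eq_getElem hk2))
  refine ⟨L, h1, ?_⟩
  rwa [Finset.sort_toFinset, Finset.sort_toFinset] at h2
end

section
/- The only maximal left-compressed intersecting subfamilies of [n]^(2), for n ≥ 4, are the star {12, 13, ..., 1n} and the triangle {12, 13, 23}. -/
open Finset

set_option maxHeartbeats 1000000 in
lemma mem_uniformOn' {n r : ℕ} {A : Finset ℕ} :
    A ∈ uniformOn n r ↔ A ⊆ Icc 1 n ∧ A.card = r := by
  simp [uniformOn, Finset.mem_powersetCard]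

lemma comp_mem_of_lc {𝒜 : Finset (Finset ℕ)} (h : LeftCompressed 𝒜)
    {i j : ℕ} (hi : 1 ≤ i) (hij : i < j) {A : Finset ℕ} (hA : A ∈ 𝒜) :
    comp i j A ∈ 𝒜 := by
  classical
  by_contra hc
  have hm : comp i j A ∈ compFam i j 𝒜 := by
    apply mem_union_right
    exact mem_image_of_mem _ (mem_filter.mpr ⟨hA, hc⟩)
  rw [h i j hi hij] at hm
  exact hc hm

lemma lc_of_comps {𝒜 : Finset (Finset ℕ)}
    (h : ∀ i j : ℕ, 1 ≤ i → i < j → ∀ A ∈ 𝒜, comp i j A ∈ 𝒜) :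
    LeftCompressed 𝒜 := by
  intro i j hi hij
  unfold compFam
  have h1 : 𝒜.filter (fun A => comp i j A ∈ 𝒜) = 𝒜 :=
    filter_true_of_mem (fun A hA => h i j hi hij A hA)
  have h2 : 𝒜.filter (fun A => comp i j A ∉ 𝒜) = ∅ :=
    filter_false_of_mem (fun A hA => not_not_intro (h i j hi hij A hA))
  rw [h1, h2, image_empty, union_empty]



lemma tri_powerset : Finset.powersetCard 2 ({1,2,3} : Finset ℕ) =
    ({{1, 2}, {1, 3}, {2, 3}} : Finset (Finset ℕ)) := by decide

lemma icc13 : Icc 1 3 = ({1,2,3} : Finset ℕ) := by decide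
lemma tri_int : IsIntersecting ({{1, 2}, {1, 3}, {2, 3}} : Finset (Finset ℕ)) := by
  intro A hA B hB
  fin_cases hA <;> fin_cases hB <;> decide
lemma tri_sub {n : ℕ} (hn : 4 ≤ n) :
    ({{1, 2}, {1, 3}, {2, 3}} : Finset (Finset ℕ)) ⊆ uniformOn n 2 := by
  intro A hA
  rw [mem_uniformOn']
  simp only [mem_insert, mem_singleton] at hA
  rcases hA with h | h | h <;> subst h <;>
    refine ⟨fun x hx => ?_, by decide⟩ <;> simp only [mem_insert, mem_singleton] at hx <;>
    · rw [mem_Icc]; omega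

lemma tri_lc : LeftCompressed ({{1, 2}, {1, 3}, {2, 3}} : Finset (Finset ℕ)) := by
  apply lc_of_comps
  intro i j hi hij A hA
  by_cases h : j ∈ A ∧ i ∉ A
  swap
  · rw [comp, if_neg h]; exact hA
  simp only [mem_insert, mem_singleton] at hA
  rcases hA with hA | hA | hA <;> subst hA <;>
      simp only [mem_insert, mem_singleton, not_or] at h <;>
      obtain ⟨hj, hi1, hi2⟩ := h
  · omega
  · have : i = 2 ∧ j = 3 := by omega
    obtain ⟨rfl, rfl⟩ := this
    decide
  · have : (i = 1 ∧ j = 3) ∨ (i = 1 ∧ j = 2) := by omega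
    rcases this with ⟨rfl, rfl⟩ | ⟨rfl, rfl⟩ <;> decide

lemma mem_tri_of {B : Finset ℕ} (h1 : B ⊆ Icc 1 3) (h2 : B.card = 2) :
    B ∈ ({{1, 2}, {1, 3}, {2, 3}} : Finset (Finset ℕ)) := by
  rw [← tri_powerset, Finset.mem_powersetCard]
  rw [icc13] at h1
  exact ⟨h1, h2⟩
lemma pair_erase {a b : ℕ} (hab : a ≠ b) : ({a, b} : Finset ℕ).erase a = {b} := by
  rw [Finset.erase_insert (by simpa using hab)]

lemma pair_erase' {a b : ℕ} (hab : a ≠ b) : ({a, b} : Finset ℕ).erase b = {a} := by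
  rw [Finset.pair_comm, Finset.erase_insert (by simpa using hab.symm)]

lemma comp_pair {i j a b : ℕ} (hj : j ∈ ({a,b} : Finset ℕ)) (hi : i ∉ ({a,b} : Finset ℕ))
    (hja : j = b) (hab : a ≠ b) : comp i j ({a, b} : Finset ℕ) = {i, a} := by
  rw [comp, if_pos ⟨hj, hi⟩, hja, pair_erase' hab]

lemma tri_max {n : ℕ} (hn : 4 ≤ n) :
    ∀ B ∈ uniformOn n 2, B ∉ ({{1, 2}, {1, 3}, {2, 3}} : Finset (Finset ℕ)) →
      ¬ IsIntersecting (insert B ({{1, 2}, {1, 3}, {2, 3}} : Finset (Finset ℕ))) := by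
  intro B hB hBT hint
  rw [mem_uniformOn'] at hB
  obtain ⟨hBs, hBc⟩ := hB
  -- B has an element ≥ 4
  have hc : ∃ c ∈ B, 4 ≤ c := by
    by_contra hcon
    push_neg at hcon
    exact hBT (mem_tri_of (fun x hx => by
      have := hBs hx; rw [mem_Icc] at this ⊢
      exact ⟨this.1, by have := hcon x hx; omega⟩) hBc)
  obtain ⟨c, hcB, hc4⟩ := hc
  obtain ⟨x, y, hxy, hBxy⟩ := Finset.card_eq_two.mp hBc
  -- the other element d
  have hd : ∃ d, B = {c, d} := by
    subst hBxy
    simp only [mem_insert, mem_singleton] at hcB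
    rcases hcB with rfl | rfl
    · exact ⟨y, rfl⟩
    · exact ⟨x, Finset.pair_comm x c⟩
  obtain ⟨d, rfl⟩ := hd
  -- pick D in triangle disjoint from B
  set D : Finset ℕ := if d = 1 then {2, 3} else if d = 2 then {1, 3} else {1, 2} with hD
  have hDT : D ∈ ({{1, 2}, {1, 3}, {2, 3}} : Finset (Finset ℕ)) := by
    rw [hD]; split_ifs <;> simp
  have hdisj : ∀ e ∈ D, e ∉ ({c, d} : Finset ℕ) := by
    intro e heD heB
    simp only [mem_insert, mem_singleton] at heB
    rw [hD] at heD
    split_ifs at heD <;> simp only [mem_insert, mem_singleton] at heD <;> omega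
  obtain ⟨e, he⟩ := hint D (mem_insert_of_mem hDT) _ (mem_insert_self _ _)
  rw [mem_inter] at he
  exact hdisj e he.1 he.2

lemma star_mem {n : ℕ} {A : Finset ℕ} :
    A ∈ star n 2 ↔ A ⊆ Icc 1 n ∧ A.card = 2 ∧ 1 ∈ A := by
  have h : A ∈ star n 2 ↔ A ∈ uniformOn n 2 ∧ 1 ∈ A := mem_filter
  rw [h, mem_uniformOn']; tauto

lemma star_int {n : ℕ} : IsIntersecting (star n 2) := by
  intro A hA B hB
  exact ⟨1, mem_inter.mpr ⟨(star_mem.mp hA).2.2, (star_mem.mp hB).2.2⟩⟩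

lemma star_lc {n : ℕ} : LeftCompressed (star n 2) := by
  apply lc_of_comps
  intro i j hi hij A hA
  by_cases h : j ∈ A ∧ i ∉ A
  swap
  · rw [comp, if_neg h]; exact hA
  obtain ⟨hjA, hiA⟩ := h
  rw [star_mem] at hA ⊢
  obtain ⟨hAs, hAc, h1A⟩ := hA
  rw [comp, if_pos ⟨hjA, hiA⟩]
  have hjn : j ≤ n := (mem_Icc.mp (hAs hjA)).2
  have h1j : (1:ℕ) ≠ j := by omega
  refine ⟨?_, ?_, ?_⟩
  · intro x hx
    rcases mem_insert.mp hx with rfl | hx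
    · rw [mem_Icc]; omega
    · exact hAs (Finset.erase_subset _ _ hx)
  · rw [Finset.card_insert_of_notMem (fun hx => hiA (Finset.erase_subset _ _ hx)),
      Finset.card_erase_of_mem hjA, hAc]
  · exact mem_insert_of_mem (Finset.mem_erase.mpr ⟨h1j, h1A⟩)

lemma star_max {n : ℕ} (hn : 4 ≤ n) :
    ∀ B ∈ uniformOn n 2, B ∉ star n 2 → ¬ IsIntersecting (insert B (star n 2)) := by
  intro B hB hBs hint
  rw [mem_uniformOn'] at hB
  obtain ⟨hBsub, hBc⟩ := hB
  have h1B : 1 ∉ B := fun h => hBs (star_mem.mpr ⟨hBsub, hBc, h⟩)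
  have hc : ∃ c ∈ Icc 2 n, c ∉ B := by
    by_contra hcon
    push_neg at hcon
    have := Finset.card_le_card hcon
    rw [Nat.card_Icc, hBc] at this
    omega
  obtain ⟨c, hcI, hcB⟩ := hc
  rw [mem_Icc] at hcI
  have hD : ({1, c} : Finset ℕ) ∈ star n 2 := by
    rw [star_mem]
    refine ⟨fun x hx => ?_, ?_, by simp⟩
    · simp only [mem_insert, mem_singleton] at hx
      rw [mem_Icc]; omega
    · rw [Finset.card_insert_of_notMem (by simp; omega), Finset.card_singleton]
  obtain ⟨e, he⟩ := hint _ (mem_insert_of_mem hD) _ (mem_insert_self _ _)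
  rw [mem_inter] at he
  obtain ⟨he1, he2⟩ := he
  simp only [mem_insert, mem_singleton] at he1
  rcases he1 with rfl | rfl
  · exact h1B he2
  · exact hcB he2
theorem stmt5 (n : ℕ) (hn : 4 ≤ n) (𝒜 : Finset (Finset ℕ)) :
    MaxLCI n 2 𝒜 ↔ (𝒜 = star n 2 ∨ 𝒜 = ({{1, 2}, {1, 3}, {2, 3}} : Finset (Finset ℕ))) := by
  constructor
  · rintro ⟨hsub, hlc, hint, hmax⟩
    by_cases h1 : ∀ A ∈ 𝒜, 1 ∈ A
    · left
      apply Finset.Subset.antisymm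
      · intro A hA
        have := mem_uniformOn'.mp (hsub hA)
        exact star_mem.mpr ⟨this.1, this.2, h1 A hA⟩
      · intro B hB
        by_contra hBA
        apply hmax B (filter_subset _ _ hB) hBA
        intro X hX Y hY
        have h1' : ∀ C ∈ insert B 𝒜, 1 ∈ C := by
          intro C hC
          rcases mem_insert.mp hC with rfl | hC
          · exact (star_mem.mp hB).2.2
          · exact h1 C hC
        exact ⟨1, mem_inter.mpr ⟨h1' X hX, h1' Y hY⟩⟩
    · right
      push_neg at h1
      obtain ⟨A₀, hA₀, h1A₀⟩ := h1
      obtain ⟨hA₀s, hA₀c⟩ := mem_uniformOn'.mp (hsub hA₀)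
      -- A₀ = {a, b} with a < b
      have hab : ∃ a b, a < b ∧ A₀ = {a, b} := by
        obtain ⟨x, y, hxy, h⟩ := Finset.card_eq_two.mp hA₀c
        rcases hxy.lt_or_gt with h' | h'
        · exact ⟨x, y, h', h⟩
        · exact ⟨y, x, h', by rw [h, Finset.pair_comm]⟩
      obtain ⟨a, b, hab, rfl⟩ := hab
      have ha2 : 2 ≤ a := by
        have := (mem_Icc.mp (hA₀s (mem_insert_self a {b}))).1
        have hne : a ≠ 1 := fun h => h1A₀ (by rw [h]; exact mem_insert_self _ _)
        omega
      have hb3 : 3 ≤ b := by omega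
      -- step 1: {2, b} ∈ 𝒜
      have h2b : ({2, b} : Finset ℕ) ∈ 𝒜 := by
        rcases eq_or_lt_of_le ha2 with h2a | h2a
        · rw [h2a]; exact hA₀
        · have hcm := comp_mem_of_lc hlc (by omega : 1 ≤ 2) h2a hA₀
          rwa [comp, if_pos ⟨mem_insert_self a {b}, by simp; omega⟩,
            pair_erase (by omega)] at hcm
      -- step 2: {2, 3} ∈ 𝒜
      have h23 : ({2, 3} : Finset ℕ) ∈ 𝒜 := by
        rcases eq_or_lt_of_le hb3 with h3b | h3b
        · rw [h3b]; exact h2b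
        · have hcm := comp_mem_of_lc hlc (by omega : 1 ≤ 3) h3b h2b
          rwa [comp_pair (by simp) (by simp; omega) rfl (by omega),
            Finset.pair_comm] at hcm
      -- 𝒜 ⊆ triangle
      have hsubT : 𝒜 ⊆ ({{1, 2}, {1, 3}, {2, 3}} : Finset (Finset ℕ)) := by
        intro A hA
        obtain ⟨hAs, hAc⟩ := mem_uniformOn'.mp (hsub hA)
        by_contra hAT
        have hc : ∃ c ∈ A, 4 ≤ c := by
          by_contra hcon
          push_neg at hcon
          exact hAT (mem_tri_of (fun x hx => by
            have := mem_Icc.mp (hAs hx)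
            rw [mem_Icc]
            exact ⟨this.1, by have := hcon x hx; omega⟩) hAc)
        obtain ⟨c, hcA, hc4⟩ := hc
        obtain ⟨d, hd⟩ := hint A hA _ h23
        rw [mem_inter] at hd
        obtain ⟨hdA, hd23⟩ := hd
        simp only [mem_insert, mem_singleton] at hd23
        have hdc : d ≠ c := by omega
        have hAeq : A = {c, d} := by
          refine (Finset.eq_of_subset_of_card_le ?_ ?_).symm
          · intro x hx
            simp only [mem_insert, mem_singleton] at hx
            rcases hx with rfl | rfl
            exacts [hcA, hdA]
          · rw [hAc, Finset.card_insert_of_notMem (by simpa using hdc.symm),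
              Finset.card_singleton]
        have h1d : (1:ℕ) < d := by omega
        have hcm := comp_mem_of_lc hlc le_rfl h1d (hAeq ▸ hA)
        rw [comp, if_pos ⟨by simp, by simp; omega⟩, pair_erase' (by omega)] at hcm
        obtain ⟨e, he⟩ := hint _ hcm _ h23
        rw [mem_inter] at he
        simp only [mem_insert, mem_singleton] at he
        omega
      -- triangle ⊆ 𝒜 by maximality
      apply Finset.Subset.antisymm hsubT
      intro B hBT
      by_contra hBA
      apply hmax B (tri_sub hn hBT) hBA
      intro X hX Y hY
      have hs : insert B 𝒜 ⊆ ({{1, 2}, {1, 3}, {2, 3}} : Finset (Finset ℕ)) :=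
        Finset.insert_subset hBT hsubT
      exact tri_int X (hs hX) Y (hs hY)
  · rintro (rfl | rfl)
    · exact ⟨filter_subset _ _, star_lc, star_int, star_max hn⟩
    · exact ⟨tri_sub hn, tri_lc, tri_int, tri_max hn⟩
end

section
/- Let r ≥ 2, n ≥ 2r, let 𝒢 be a collection of subsets of [2r] of size at most r, and X ⊆ [2, 2r]. Then |{A ∈ ⟨𝒢⟩_r^n : A ∩ X ≠ ∅}| = Σ_{i=1}^{r} |{B ∈ ⟨𝒢⟩_i^{2r} : B ∩ X ≠ ∅ and B is ≺-witnessing}| · C(n − 2r, r − i), where ⟨𝒢⟩_i^{2r} = {B ∈ [2r]^(i) : B ≺ G for some G ∈ 𝒢} and the sum counts each A ∈ ⟨𝒢⟩_r^n(X) exactly once via its initial segment inside [2r]. -/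
open Finset

lemma sortUnionAux {B C : Finset ℕ} (h : ∀ b ∈ B, ∀ c ∈ C, b < c) :
    (B ∪ C).sort (· ≤ ·) = B.sort (· ≤ ·) ++ C.sort (· ≤ ·) := by
  have hd : Disjoint B C := by
    rw [Finset.disjoint_left]; intro a haB haC; exact absurd (h a haB a haC) (lt_irrefl a)
  have hval : (B ∪ C).val = B.val + C.val := by
    rw [← Finset.disjUnion_eq_union B C hd]; rfl
  have hperm : List.Perm ((B ∪ C).sort (· ≤ ·)) (B.sort (· ≤ ·) ++ C.sort (· ≤ ·)) := by
    rw [← Multiset.coe_eq_coe,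
      show ((B.sort (· ≤ ·) ++ C.sort (· ≤ ·) : List ℕ) : Multiset ℕ)
        = (B.sort (· ≤ ·) : Multiset ℕ) + (C.sort (· ≤ ·) : Multiset ℕ) from rfl,
      Finset.sort_eq, Finset.sort_eq, Finset.sort_eq, hval]
  have hs2 : (B.sort (· ≤ ·) ++ C.sort (· ≤ ·)).Pairwise (· ≤ ·) := by
    refine List.pairwise_append.2 ⟨Finset.pairwise_sort _ _, Finset.pairwise_sort _ _, ?_⟩
    exact fun a ha b hb => le_of_lt (h a (by simpa using ha) b (by simpa using hb))
  exact List.Perm.eq_of_pairwise' (Finset.pairwise_sort _ _) hs2 hperm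

lemma precUnionAux {B C G : Finset ℕ} (hBC : ∀ b ∈ B, ∀ c ∈ C, b < c)
    (hGC : ∀ g ∈ G, ∀ c ∈ C, g < c) : prec (B ∪ C) G ↔ prec B G := by
  have hd : Disjoint B C := by
    rw [Finset.disjoint_left]; intro a haB haC; exact absurd (hBC a haB a haC) (lt_irrefl a)
  have hs := sortUnionAux hBC
  have hlen : ∀ (S : Finset ℕ), (S.sort (· ≤ ·)).length = S.card := fun S =>
    Finset.length_sort _
  constructor
  · rintro ⟨hcard, hle⟩
    have hGB : G.card ≤ B.card := by
      by_contra hlt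
      push_neg at hlt
      -- position B.card
      have h1 : B.card < ((B ∪ C).sort (· ≤ ·)).length := by
        rw [hlen]
        calc B.card < G.card := hlt
          _ ≤ (B ∪ C).card := hcard
      obtain ⟨a, ha, hamem⟩ : ∃ a, ((B ∪ C).sort (· ≤ ·))[B.card]? = some a ∧
          a ∈ ((B ∪ C).sort (· ≤ ·)) := by
        refine ⟨_, List.getElem?_eq_getElem h1, List.getElem_mem h1⟩
      have haC : a ∈ C := by
        rw [hs] at ha
        rw [List.getElem?_append_right (by rw [hlen]) ] at ha
        have := List.getElem?_eq_some_iff.mp ha |>.2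
        have : a ∈ C.sort (· ≤ ·) := this ▸ List.getElem_mem _
        simpa using this
      have h2 : B.card < (G.sort (· ≤ ·)).length := by rw [hlen]; exact hlt
      obtain ⟨g, hg, hgmem⟩ : ∃ g, (G.sort (· ≤ ·))[B.card]? = some g ∧
          g ∈ (G.sort (· ≤ ·)) := ⟨_, List.getElem?_eq_getElem h2, List.getElem_mem h2⟩
      have hag := hle B.card a g ha hg
      have : g < a := hGC g (by simpa using hgmem) a haC
      omega
    refine ⟨hGB, ?_⟩
    intro k a g ha hg
    refine hle k a g ?_ hg
    rw [hs, List.getElem?_append_left]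
    · exact ha
    · exact List.getElem?_eq_some_iff.mp ha |>.1
  · rintro ⟨hGB, hle⟩
    refine ⟨hGB.trans (Finset.card_le_card Finset.subset_union_left), ?_⟩
    intro k a g ha hg
    have hkG : k < G.card := by rw [← hlen]; exact List.getElem?_eq_some_iff.mp hg |>.1
    have hkB : k < (B.sort (· ≤ ·)).length := by rw [hlen]; omega
    rw [hs, List.getElem?_append_left hkB] at ha
    exact hle k a g ha hg

lemma memHittingAux {m i : ℕ} {𝒢 : Finset (Finset ℕ)} {X B : Finset ℕ} :
    B ∈ hitting (genP i m 𝒢) X ↔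
      (B ⊆ Icc 1 m ∧ B.card = i) ∧ (∃ G ∈ 𝒢, prec B G) ∧ (B ∩ X).Nonempty := by
  simp [hitting, genP, uniformOn, Finset.mem_filter, Finset.mem_powersetCard, and_assoc]

theorem stmt10 (n r : ℕ) (hr : 2 ≤ r) (hn : 2 * r ≤ n) (𝒢 : Finset (Finset ℕ))
    (h𝒢 : ∀ G ∈ 𝒢, G ⊆ Icc 1 (2 * r) ∧ G.card ≤ r) (X : Finset ℕ)
    (hX : X ⊆ Icc 2 (2 * r)) :
    (hitting (genP r n 𝒢) X).card =
      ∑ i ∈ Icc 1 r, (hitting (genP i (2 * r) 𝒢) X).card * Nat.choose (n - 2 * r) (r - i) := by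
    classical
  set I := Icc 1 (2 * r) with hIdef
  set J := Icc (2 * r + 1) n with hJdef
  have hmemI : ∀ x, x ∈ I ↔ 1 ≤ x ∧ x ≤ 2 * r := fun x => Finset.mem_Icc
  have hmemJ : ∀ x, x ∈ J ↔ 2 * r + 1 ≤ x ∧ x ≤ n := fun x => Finset.mem_Icc
  rw [Finset.card_eq_sum_card_fiberwise (f := fun A => (A ∩ I).card) (t := Icc 1 r) ?_]
  · refine Finset.sum_congr rfl fun i hi => ?_
    rw [Finset.mem_Icc] at hi
    have hcardJ : J.card = n - 2 * r := by rw [hJdef, Nat.card_Icc]; omega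
    have key : ((hitting (genP r n 𝒢) X).filter fun A => (A ∩ I).card = i).card
        = ((hitting (genP i (2 * r) 𝒢) X) ×ˢ J.powersetCard (r - i)).card := by
      apply Finset.card_nbij' (i := fun A => (A ∩ I, A \ I)) (j := fun p => p.1 ∪ p.2)
      · -- forward membership
        intro A hA
        rw [Finset.mem_coe, Finset.mem_filter] at hA
        obtain ⟨hA, hAi⟩ := hA
        rw [memHittingAux] at hA
        obtain ⟨⟨hAsub, hAcard⟩, ⟨G, hG𝒢, hGp⟩, hAX⟩ := hA
        have hAn : ∀ a ∈ A, 1 ≤ a ∧ a ≤ n := fun a ha => Finset.mem_Icc.mp (hAsub ha)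
        have hBC : ∀ b ∈ A ∩ I, ∀ c ∈ A \ I, b < c := by
          intro b hb c hc
          rw [Finset.mem_inter, hmemI] at hb
          rw [Finset.mem_sdiff] at hc
          have h1 := hAn c hc.1
          have h2 : ¬ (1 ≤ c ∧ c ≤ 2 * r) := fun h => hc.2 ((hmemI c).mpr h)
          omega
        have hGC : ∀ g ∈ G, ∀ c ∈ A \ I, g < c := by
          intro g hg c hc
          have h3 := Finset.mem_Icc.mp ((h𝒢 G hG𝒢).1 hg)
          rw [Finset.mem_sdiff] at hc
          have h1 := hAn c hc.1
          have h2 : ¬ (1 ≤ c ∧ c ≤ 2 * r) := fun h => hc.2 ((hmemI c).mpr h)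
          omega
        have hunion : (A ∩ I) ∪ (A \ I) = A := by
          ext x; simp only [Finset.mem_union, Finset.mem_inter, Finset.mem_sdiff]; tauto
        rw [Finset.mem_coe, Finset.mem_product]
        constructor
        · rw [memHittingAux]
          refine ⟨⟨fun x hx => (Finset.mem_inter.mp hx).2, hAi⟩, ⟨G, hG𝒢, ?_⟩, ?_⟩
          · rw [← precUnionAux hBC hGC, hunion]; exact hGp
          · obtain ⟨x, hx⟩ := hAX
            rw [Finset.mem_inter] at hx
            refine ⟨x, Finset.mem_inter.mpr ⟨Finset.mem_inter.mpr ⟨hx.1, ?_⟩, hx.2⟩⟩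
            have := Finset.mem_Icc.mp (hX hx.2)
            rw [hmemI]; omega
        · rw [Finset.mem_powersetCard]
          constructor
          · intro c hc
            rw [Finset.mem_sdiff] at hc
            have h1 := hAn c hc.1
            have h2 : ¬ (1 ≤ c ∧ c ≤ 2 * r) := fun h => hc.2 ((hmemI c).mpr h)
            rw [hmemJ]; omega
          · have : A \ I = A \ (A ∩ I) := by
              ext x; simp only [Finset.mem_sdiff, Finset.mem_inter]; tauto
            beta_reduce
            rw [this, Finset.card_sdiff_of_subset Finset.inter_subset_left, hAcard, hAi]
      · -- backward membership
        rintro ⟨B, C⟩ hp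
        rw [Finset.mem_coe, Finset.mem_product] at hp
        obtain ⟨hB, hC⟩ := hp
        rw [memHittingAux] at hB
        obtain ⟨⟨hBsub, hBcard⟩, ⟨G, hG𝒢, hGp⟩, hBX⟩ := hB
        rw [Finset.mem_powersetCard] at hC
        obtain ⟨hCsub, hCcard⟩ := hC
        have hBC : ∀ b ∈ B, ∀ c ∈ C, b < c := by
          intro b hb c hc
          have h1 := Finset.mem_Icc.mp (hBsub hb)
          have h2 := (hmemJ c).mp (hCsub hc)
          omega
        have hGC : ∀ g ∈ G, ∀ c ∈ C, g < c := by
          intro g hg c hc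
          have h1 := Finset.mem_Icc.mp ((h𝒢 G hG𝒢).1 hg)
          have h2 := (hmemJ c).mp (hCsub hc)
          omega
        have hd : Disjoint B C := by
          rw [Finset.disjoint_left]
          intro a ha ha'
          exact absurd (hBC a ha a ha') (lt_irrefl a)
        have hCI : ∀ c ∈ C, c ∉ I := by
          intro c hc hcI
          have h1 := (hmemJ c).mp (hCsub hc)
          have h2 := (hmemI c).mp hcI
          omega
        have hinter : (B ∪ C) ∩ I = B := by
          ext x
          simp only [Finset.mem_inter, Finset.mem_union]
          constructor
          · rintro ⟨hx | hx, hxI⟩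
            · exact hx
            · exact absurd hxI (hCI x hx)
          · intro hx
            exact ⟨Or.inl hx, hBsub hx⟩
        rw [Finset.mem_coe, Finset.mem_filter]
        refine ⟨?_, by rw [hinter, hBcard]⟩
        rw [memHittingAux]
        refine ⟨⟨?_, ?_⟩, ⟨G, hG𝒢, (precUnionAux hBC hGC).mpr hGp⟩, ?_⟩
        · intro x hx
          rw [Finset.mem_union] at hx
          rcases hx with hx | hx
          · have := Finset.mem_Icc.mp (hBsub hx)
            rw [Finset.mem_Icc]; omega
          · have := (hmemJ x).mp (hCsub hx)
            rw [Finset.mem_Icc]; omega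
        · rw [Finset.card_union_of_disjoint hd, hBcard, hCcard]; omega
        · obtain ⟨x, hx⟩ := hBX
          rw [Finset.mem_inter] at hx
          exact ⟨x, Finset.mem_inter.mpr ⟨Finset.mem_union_left _ hx.1, hx.2⟩⟩
      · -- left inverse
        intro A hA
        ext x; simp only [Finset.mem_union, Finset.mem_inter, Finset.mem_sdiff]; tauto
      · -- right inverse
        rintro ⟨B, C⟩ hp
        rw [Finset.mem_coe, Finset.mem_product] at hp
        obtain ⟨hB, hC⟩ := hp
        rw [memHittingAux] at hB
        obtain ⟨⟨hBsub, hBcard⟩, -, -⟩ := hB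
        rw [Finset.mem_powersetCard] at hC
        have hBI : ∀ b ∈ B, b ∈ I := fun b hb => hBsub hb
        have hCI : ∀ c ∈ C, c ∉ I := by
          intro c hc hcI
          have h1 := (hmemJ c).mp (hC.1 hc)
          have h2 := (hmemI c).mp hcI
          omega
        have e1 : (B ∪ C) ∩ I = B := by
          ext x
          simp only [Finset.mem_inter, Finset.mem_union]
          constructor
          · rintro ⟨hx | hx, hxI⟩
            · exact hx
            · exact absurd hxI (hCI x hx)
          · intro hx; exact ⟨Or.inl hx, hBI x hx⟩
        have e2 : (B ∪ C) \ I = C := by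
          ext x
          simp only [Finset.mem_sdiff, Finset.mem_union]
          constructor
          · rintro ⟨hx | hx, hxI⟩
            · exact absurd (hBI x hx) hxI
            · exact hx
          · intro hx; exact ⟨Or.inr hx, hCI x hx⟩
        beta_reduce
        rw [e1, e2]
    rw [key, Finset.card_product, Finset.card_powersetCard, hcardJ]
  · -- fibers land in Icc 1 r
    intro A hA
    rw [Finset.mem_coe, memHittingAux] at hA
    obtain ⟨⟨hAsub, hAcard⟩, -, hAX⟩ := hA
    rw [Finset.mem_coe, Finset.mem_Icc]
    constructor
    · obtain ⟨x, hx⟩ := hAX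
      rw [Finset.mem_inter] at hx
      have hxI : x ∈ I := by
        have := Finset.mem_Icc.mp (hX hx.2)
        rw [hmemI]; omega
      have : (A ∩ I).Nonempty := ⟨x, Finset.mem_inter.mpr ⟨hx.1, hxI⟩⟩
      exact Finset.card_pos.mpr this
    · calc (A ∩ I).card ≤ A.card := Finset.card_le_card Finset.inter_subset_left
        _ = r := hAcard
end

section
/- No X ⊆ [2, r+1] is good: for every nonempty X ⊆ [2, r+1] (with r ≥ 2, n ≥ 2r), there exists a left-compressed intersecting family 𝒜 ⊆ [n]^(r) with |𝒜(X)| > |𝒮(X)|, where 𝒮 is the star at 1. -/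
open Finset

lemma compFam_eq_of_closed (i j : ℕ) (𝒜 : Finset (Finset ℕ))
    (h : ∀ A ∈ 𝒜, comp i j A ∈ 𝒜) : compFam i j 𝒜 = 𝒜 := by
  unfold compFam
  have h1 : 𝒜.filter (fun A => comp i j A ∈ 𝒜) = 𝒜 := Finset.filter_eq_self.2 h
  have h2 : 𝒜.filter (fun A => comp i j A ∉ 𝒜) = ∅ :=
    Finset.filter_eq_empty_iff.2 (by intro A hA hc; exact hc (h A hA))
  rw [h1, h2]; simp

lemma comp_card (i j : ℕ) (A : Finset ℕ) : (comp i j A).card = A.card := by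
  unfold comp
  split_ifs with h
  · rw [Finset.card_insert_of_notMem (by simp [h.2]), Finset.card_erase_of_mem h.1]
    have : 1 ≤ A.card := Finset.card_pos.2 ⟨j, h.1⟩
    omega
  · rfl

theorem stmt12 (n r : ℕ) (hr : 2 ≤ r) (hn : 2 * r ≤ n) (X : Finset ℕ)
    (hX : X ⊆ Icc 2 (r + 1)) (hXne : X.Nonempty) :
    ∃ 𝒜 : Finset (Finset ℕ), 𝒜 ⊆ uniformOn n r ∧ LeftCompressed 𝒜 ∧
      IsIntersecting 𝒜 ∧ (hitting (star n r) X).card < (hitting 𝒜 X).card := by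
  set G : Finset ℕ := Icc 2 (r + 1) with hGdef
  have hGcard : G.card = r := by simp [hGdef, Nat.card_Icc]
  have hGsub : G ⊆ Icc 1 n := by
    intro x hx
    simp only [hGdef, mem_Icc] at hx ⊢
    omega
  have hGuni : G ∈ uniformOn n r := by
    simp only [uniformOn, mem_powersetCard]
    exact ⟨hGsub, hGcard⟩
  have hGstar : G ∉ star n r := by
    intro h
    have := (mem_filter.1 h).2
    simp [hGdef, mem_Icc] at this
  set ℬ : Finset (Finset ℕ) := (star n r).filter (fun A => (A ∩ G).Nonempty) with hBdef
  refine ⟨insert G ℬ, ?_, ?_, ?_, ?_⟩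
  · -- subset of uniformOn
    intro A hA
    rcases mem_insert.1 hA with h | h
    · exact h ▸ hGuni
    · exact (mem_filter.1 (mem_filter.1 h).1).1
  · -- left-compressed
    intro i j hi hij
    apply compFam_eq_of_closed
    intro A hA
    by_cases hch : j ∈ A ∧ i ∉ A
    swap
    · rwa [show comp i j A = A from if_neg hch]
    have hcomp : comp i j A = insert i (A.erase j) := if_pos hch
    rcases mem_insert.1 hA with hAG | hAB
    · -- A = G
      subst hAG
      have hi1 : i = 1 := by
        rcases hch with ⟨hj, hiN⟩
        simp only [hGdef, mem_Icc] at hj hiN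
        omega
      apply mem_insert_of_mem
      rw [hBdef, mem_filter]
      constructor
      · simp only [_root_.star, mem_filter]
        constructor
        · simp only [uniformOn, mem_powersetCard]
          constructor
          · rw [hcomp]
            intro x hx
            rcases mem_insert.1 hx with h | h
            · subst h; simp only [mem_Icc]; omega
            · exact hGsub (mem_of_mem_erase h)
          · rw [comp_card, hGcard]
        · rw [hcomp, hi1]; exact mem_insert_self 1 _
      · -- hits G : erase j of G is nonempty
        have : ∃ x, x ∈ G ∧ x ≠ j := by
          have h2 : (2 : ℕ) ∈ G := by simp [hGdef, mem_Icc]; omega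
          have h3 : (3 : ℕ) ∈ G := by simp [hGdef, mem_Icc]; omega
          by_cases hj2 : j = 2
          · exact ⟨3, h3, by omega⟩
          · exact ⟨2, h2, Ne.symm hj2⟩
        obtain ⟨x, hxG, hxj⟩ := this
        refine ⟨x, ?_⟩
        rw [hcomp, mem_inter]
        exact ⟨mem_insert_of_mem (mem_erase.2 ⟨hxj, hxG⟩), hxG⟩
    · -- A ∈ ℬ
      simp only [hBdef, _root_.star, mem_filter] at hAB
      obtain ⟨⟨hAuni, h1A⟩, hAG⟩ := hAB
      simp only [uniformOn, mem_powersetCard] at hAuni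
      apply mem_insert_of_mem
      rw [hBdef, mem_filter]
      refine ⟨?_, ?_⟩
      · simp only [_root_.star, mem_filter]
        refine ⟨?_, ?_⟩
        · simp only [uniformOn, mem_powersetCard]
          refine ⟨?_, by rw [comp_card, hAuni.2]⟩
          rw [hcomp]
          intro x hx
          rcases mem_insert.1 hx with h | h
          · subst h
            have hj : j ∈ Icc 1 n := hAuni.1 hch.1
            simp only [mem_Icc] at hj ⊢
            omega
          · exact hAuni.1 (mem_of_mem_erase h)
        · rw [hcomp]
          apply mem_insert_of_mem
          refine mem_erase.2 ⟨?_, h1A⟩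
          omega
      · obtain ⟨x, hx⟩ := hAG
        rw [mem_inter] at hx
        by_cases hxj : x = j
        · -- replace by i
          have hjG : j ∈ G := hxj ▸ hx.2
          have hiG : i ∈ G := by
            have hi1 : i ≠ 1 := fun h => hch.2 (h ▸ h1A)
            simp only [hGdef, mem_Icc] at hjG ⊢
            omega
          exact ⟨i, mem_inter.2 ⟨hcomp ▸ mem_insert_self i _, hiG⟩⟩
        · refine ⟨x, mem_inter.2 ⟨?_, hx.2⟩⟩
          rw [hcomp]
          exact mem_insert_of_mem (mem_erase.2 ⟨hxj, hx.1⟩)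
  · -- intersecting
    intro A hA B hB
    rcases mem_insert.1 hA with hAG | hAB <;> rcases mem_insert.1 hB with hBG | hBB
    · subst hAG; subst hBG
      refine ⟨2, ?_⟩
      simp [hGdef, mem_Icc]; omega
    · subst hAG
      rw [hBdef, mem_filter] at hBB
      obtain ⟨x, hx⟩ := hBB.2
      rw [mem_inter] at hx
      exact ⟨x, mem_inter.2 ⟨hx.2, hx.1⟩⟩
    · subst hBG
      exact (mem_filter.1 hAB).2
    · simp only [hBdef, _root_.star, mem_filter] at hAB hBB
      exact ⟨1, mem_inter.2 ⟨hAB.1.2, hBB.1.2⟩⟩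
  · -- cardinality
    have hXG : ∀ A : Finset ℕ, (A ∩ X).Nonempty → (A ∩ G).Nonempty := by
      intro A ⟨x, hx⟩
      rw [mem_inter] at hx
      exact ⟨x, mem_inter.2 ⟨hx.1, hX hx.2⟩⟩
    have hhB : hitting ℬ X = hitting (star n r) X := by
      ext A
      simp only [hitting, hBdef, mem_filter]
      constructor
      · rintro ⟨⟨h1, _⟩, h3⟩; exact ⟨h1, h3⟩
      · rintro ⟨h1, h3⟩; exact ⟨⟨h1, hXG A h3⟩, h3⟩
    have hGX : (G ∩ X).Nonempty := by
      obtain ⟨x, hx⟩ := hXne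
      exact ⟨x, mem_inter.2 ⟨hX hx, hx⟩⟩
    have : hitting (insert G ℬ) X = insert G (hitting ℬ X) := by
      simp only [hitting, filter_insert, if_pos hGX]
    rw [this, hhB, card_insert_of_notMem]
    · omega
    · rw [hitting, mem_filter]
      rintro ⟨h1, _⟩
      exact hGstar h1
end

section
/- Let r ≥ 3, n ≥ 2r, and X = {2, 3, k} with r + 2 ≤ k ≤ n. Let ℬ = {A ∈ [n]^(r) : |A ∩ {1,2,3}| ≥ 2} (the family generated by {23}, i.e., all r-sets containing at least two of 1, 2, 3). Then ℬ is a left-compressed intersecting family and |ℬ(X)| = C(n−2, r−2) + 2·C(n−3, r−2) > |𝒮(X)|, where 𝒮 is the star at 1. Hence X = {2,3,k} is not good. -/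
open Finset

lemma card123 (A : Finset ℕ) :
    2 ≤ (A ∩ {1,2,3}).card ↔
      (2∈A ∧ 3∈A) ∨ (1∈A ∧ 2∈A ∧ 3∉A) ∨ (1∈A ∧ 3∈A ∧ 2∉A) := by
  have he : A ∩ {1,2,3} = ({1,2,3} : Finset ℕ).filter (· ∈ A) := by
    ext x; simp [Finset.mem_inter, and_comm]
  rw [he]
  by_cases h1 : 1 ∈ A <;> by_cases h2 : 2 ∈ A <;> by_cases h3 : 3 ∈ A <;>
    simp [Finset.filter_insert, Finset.filter_singleton, h1, h2, h3]

lemma B_closed (n r i j : ℕ) (hi : 1 ≤ i) (hij : i < j) (A : Finset ℕ)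
    (hA : A ∈ ((Finset.Icc 1 n).powersetCard r).filter (fun A => 2 ≤ (A ∩ {1,2,3}).card)) :
    comp i j A ∈ ((Finset.Icc 1 n).powersetCard r).filter (fun A => 2 ≤ (A ∩ {1,2,3}).card) := by
  simp only [Finset.mem_filter, Finset.mem_powersetCard] at hA ⊢
  obtain ⟨⟨hAs, hAc⟩, hA2⟩ := hA
  unfold comp
  split_ifs with hc
  · obtain ⟨hjA, hiA⟩ := hc
    have hjn : j ≤ n := (Finset.mem_Icc.mp (hAs hjA)).2
    have hinotE : i ∉ A.erase j := fun h => hiA (Finset.mem_of_mem_erase h)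
    refine ⟨⟨?_, ?_⟩, ?_⟩
    · intro x hx
      rcases Finset.mem_insert.mp hx with rfl | hx
      · exact Finset.mem_Icc.mpr ⟨hi, le_trans (le_of_lt hij) hjn⟩
      · exact hAs (Finset.mem_of_mem_erase hx)
    · rw [Finset.card_insert_of_notMem hinotE, Finset.card_erase_of_mem hjA]
      have : 1 ≤ A.card := Finset.card_pos.mpr ⟨j, hjA⟩
      omega
    · by_cases hjS : j ∈ ({1,2,3} : Finset ℕ)
      · have hiS : i ∈ ({1,2,3} : Finset ℕ) := by
          simp only [Finset.mem_insert, Finset.mem_singleton] at hjS ⊢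
          omega
        have hsub : insert i ((A ∩ {1,2,3}).erase j) ⊆ insert i (A.erase j) ∩ {1,2,3} := by
          intro x hx
          rcases Finset.mem_insert.mp hx with rfl | hx
          · exact Finset.mem_inter.mpr ⟨Finset.mem_insert_self _ _, hiS⟩
          · have h1 := Finset.mem_of_mem_erase hx
            have h2 := Finset.ne_of_mem_erase hx
            exact Finset.mem_inter.mpr ⟨Finset.mem_insert_of_mem
              (Finset.mem_erase.mpr ⟨h2, (Finset.mem_inter.mp h1).1⟩), (Finset.mem_inter.mp h1).2⟩
        have hcard : (insert i ((A ∩ {1,2,3}).erase j)).card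
            = ((A ∩ {1,2,3}).erase j).card + 1 := by
          apply Finset.card_insert_of_notMem
          intro h
          exact hiA (Finset.mem_inter.mp (Finset.mem_of_mem_erase h)).1
        have hjin : j ∈ A ∩ {1,2,3} := Finset.mem_inter.mpr ⟨hjA, hjS⟩
        have := Finset.card_le_card hsub
        rw [hcard, Finset.card_erase_of_mem hjin] at this
        omega
      · have hsub : A ∩ {1,2,3} ⊆ insert i (A.erase j) ∩ {1,2,3} := by
          intro x hx
          obtain ⟨hxA, hxS⟩ := Finset.mem_inter.mp hx
          have hxj : x ≠ j := fun h => hjS (h ▸ hxS)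
          exact Finset.mem_inter.mpr
            ⟨Finset.mem_insert_of_mem (Finset.mem_erase.mpr ⟨hxj, hxA⟩), hxS⟩
        exact le_trans hA2 (Finset.card_le_card hsub)
  · exact ⟨⟨hAs, hAc⟩, hA2⟩

lemma inter_of_card123 (A B : Finset ℕ) (hA : 2 ≤ (A ∩ {1,2,3}).card)
    (hB : 2 ≤ (B ∩ {1,2,3}).card) : (A ∩ B).Nonempty := by
  rw [card123] at hA hB
  rcases hA with ⟨a2,a3⟩|⟨a1,a2,a3⟩|⟨a1,a3,a2⟩ <;>
    rcases hB with ⟨b2,b3⟩|⟨b1,b2,b3⟩|⟨b1,b3,b2⟩ <;>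
    first
      | exact ⟨1, Finset.mem_inter.mpr ⟨by assumption, by assumption⟩⟩
      | exact ⟨2, Finset.mem_inter.mpr ⟨by assumption, by assumption⟩⟩
      | exact ⟨3, Finset.mem_inter.mpr ⟨by assumption, by assumption⟩⟩

lemma count_aux (s t u : Finset ℕ) (r : ℕ) (hts : t ⊆ s) (htu : Disjoint t u)
    (htr : t.card ≤ r) :
    ((s.powersetCard r).filter fun A => t ⊆ A ∧ Disjoint u A).card
      = (s \ (t ∪ u)).card.choose (r - t.card) := by
  rw [← Finset.card_powersetCard]
  apply Finset.card_bij' (fun A _ => A \ t) (fun B _ => B ∪ t)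
  · intro A hA
    simp only [Finset.mem_filter, Finset.mem_powersetCard] at hA ⊢
    obtain ⟨⟨hAs, hAc⟩, htA, huA⟩ := hA
    constructor
    · intro x hx
      simp only [Finset.mem_sdiff, Finset.mem_union] at hx ⊢
      exact ⟨hAs hx.1, fun h => h.elim hx.2 (fun hu => Finset.disjoint_left.mp huA hu hx.1)⟩
    · rw [Finset.card_sdiff_of_subset htA, hAc]
  · intro B hB
    simp only [Finset.mem_filter, Finset.mem_powersetCard] at hB ⊢
    obtain ⟨hBs, hBc⟩ := hB
    have hBt : Disjoint B t := by
      refine Finset.disjoint_left.mpr fun x hx hxt => ?_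
      have := hBs hx
      simp only [Finset.mem_sdiff, Finset.mem_union] at this
      exact this.2 (Or.inl hxt)
    refine ⟨⟨Finset.union_subset (fun x hx => (Finset.mem_sdiff.mp (hBs hx)).1) hts, ?_⟩,
      Finset.subset_union_right, ?_⟩
    · rw [Finset.card_union_of_disjoint hBt, hBc]
      omega
    · refine Finset.disjoint_left.mpr fun x hxu hxB => ?_
      rcases Finset.mem_union.mp hxB with h | h
      · have := hBs h
        simp only [Finset.mem_sdiff, Finset.mem_union] at this
        exact this.2 (Or.inr hxu)
      · exact Finset.disjoint_left.mp htu h hxu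
  · intro A hA
    simp only [Finset.mem_filter] at hA
    exact Finset.sdiff_union_of_subset hA.2.1
  · intro B hB
    simp only [Finset.mem_powersetCard] at hB
    have hBt : Disjoint B t := by
      refine Finset.disjoint_left.mpr fun x hx hxt => ?_
      have := hB.1 hx
      simp only [Finset.mem_sdiff, Finset.mem_union] at this
      exact this.2 (Or.inl hxt)
    exact Finset.union_sdiff_cancel_right hBt

lemma pascal_ineq (m s : ℕ) (h : s ≤ m) :
    Nat.choose (m+3) (s+2)
      < (Nat.choose (m+2) (s+1) + 2 * Nat.choose (m+1) (s+1)) + Nat.choose m (s+2) := by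
  have p1 : Nat.choose (m+3) (s+2) = Nat.choose (m+2) (s+1) + Nat.choose (m+2) (s+2) :=
    Nat.choose_succ_succ (m+2) (s+1)
  have p2 : Nat.choose (m+2) (s+2) = Nat.choose (m+1) (s+1) + Nat.choose (m+1) (s+2) :=
    Nat.choose_succ_succ (m+1) (s+1)
  have p3 : Nat.choose (m+1) (s+2) = Nat.choose m (s+1) + Nat.choose m (s+2) :=
    Nat.choose_succ_succ m (s+1)
  have p4 : Nat.choose (m+1) (s+1) = Nat.choose m s + Nat.choose m (s+1) :=
    Nat.choose_succ_succ m s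
  have p5 : 0 < Nat.choose m s := Nat.choose_pos h
  omega

theorem stmt14 (n r k : ℕ) (hr : 3 ≤ r) (hn : 2 * r ≤ n) (hk : r + 2 ≤ k)
    (hkn : k ≤ n) :
    LeftCompressed ((uniformOn n r).filter (fun A => 2 ≤ (A ∩ {1, 2, 3}).card)) ∧
    IsIntersecting ((uniformOn n r).filter (fun A => 2 ≤ (A ∩ {1, 2, 3}).card)) ∧
    (hitting ((uniformOn n r).filter (fun A => 2 ≤ (A ∩ {1, 2, 3}).card)) {2, 3, k}).card =
      Nat.choose (n - 2) (r - 2) + 2 * Nat.choose (n - 3) (r - 2) ∧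
    (hitting (star n r) {2, 3, k}).card <
      (hitting ((uniformOn n r).filter (fun A => 2 ≤ (A ∩ {1, 2, 3}).card)) {2, 3, k}).card ∧
    ¬ IsGood n r {2, 3, k} := by
  have hn6 : 6 ≤ n := by omega
  have hk5 : 5 ≤ k := by omega
  set U := uniformOn n r with hUdef
  set ℬ := U.filter (fun A => 2 ≤ (A ∩ ({1, 2, 3} : Finset ℕ)).card) with hBdef
  have hUeq : U = (Finset.Icc 1 n).powersetCard r := rfl
  -- Left compressed
  have hLC : LeftCompressed ℬ := by
    intro i j hi hij
    exact compFam_eq_of_closed i j ℬ (fun A hA => B_closed n r i j hi hij A hA)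
  -- Intersecting
  have hInt : IsIntersecting ℬ := by
    intro A hA B hB
    exact inter_of_card123 A B (Finset.mem_filter.mp hA).2 (Finset.mem_filter.mp hB).2
  -- hitting ℬ X = ℬ
  have hitB : hitting ℬ {2,3,k} = ℬ := by
    unfold hitting
    apply Finset.filter_true_of_mem
    intro A hA
    rcases (card123 A).mp (Finset.mem_filter.mp hA).2 with ⟨h2,h3⟩|⟨_,h2,_⟩|⟨_,h3,_⟩
    · exact ⟨2, Finset.mem_inter.mpr ⟨h2, by simp⟩⟩
    · exact ⟨2, Finset.mem_inter.mpr ⟨h2, by simp⟩⟩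
    · exact ⟨3, Finset.mem_inter.mpr ⟨h3, by simp⟩⟩
  -- counts of the three pieces
  have c1 : (U.filter (fun A => 2∈A ∧ 3∈A)).card = (n-2).choose (r-2) := by
    have hsub : ({2,3} : Finset ℕ) ⊆ Finset.Icc 1 n := by
      intro x hx
      simp only [Finset.mem_insert, Finset.mem_singleton] at hx
      rw [Finset.mem_Icc]; omega
    have ht2 : ({2,3} : Finset ℕ).card = 2 := by decide
    have he : U.filter (fun A => 2∈A ∧ 3∈A)
        = ((Finset.Icc 1 n).powersetCard r).filter
            (fun A => ({2,3} : Finset ℕ) ⊆ A ∧ Disjoint (∅ : Finset ℕ) A) := by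
      rw [hUeq]
      apply Finset.filter_congr
      intro A _
      simp [Finset.insert_subset_iff]
    rw [he, count_aux _ _ _ _ hsub (by simp) (by omega), Finset.union_empty,
      Finset.card_sdiff_of_subset hsub, ht2, Nat.card_Icc]
    congr 1
  have c2 : (U.filter (fun A => 1∈A ∧ 2∈A ∧ 3∉A)).card = (n-3).choose (r-2) := by
    have hsub : ({1,2} : Finset ℕ) ⊆ Finset.Icc 1 n := by
      intro x hx
      simp only [Finset.mem_insert, Finset.mem_singleton] at hx
      rw [Finset.mem_Icc]; omega
    have hsub3 : ({1,2} : Finset ℕ) ∪ ({3} : Finset ℕ) ⊆ Finset.Icc 1 n := by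
      intro x hx
      simp only [Finset.mem_union, Finset.mem_insert, Finset.mem_singleton] at hx
      rw [Finset.mem_Icc]; omega
    have he : U.filter (fun A => 1∈A ∧ 2∈A ∧ 3∉A)
        = ((Finset.Icc 1 n).powersetCard r).filter
            (fun A => ({1,2} : Finset ℕ) ⊆ A ∧ Disjoint ({3} : Finset ℕ) A) := by
      rw [hUeq]
      apply Finset.filter_congr
      intro A _
      simp [Finset.insert_subset_iff, Finset.disjoint_singleton_left]
      tauto
    rw [he, count_aux _ _ _ _ hsub (by decide) (by simp; omega),
      Finset.card_sdiff_of_subset hsub3, Nat.card_Icc]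
    congr 1 <;> simp <;> omega
  have c3 : (U.filter (fun A => 1∈A ∧ 3∈A ∧ 2∉A)).card = (n-3).choose (r-2) := by
    have hsub : ({1,3} : Finset ℕ) ⊆ Finset.Icc 1 n := by
      intro x hx
      simp only [Finset.mem_insert, Finset.mem_singleton] at hx
      rw [Finset.mem_Icc]; omega
    have hsub3 : ({1,3} : Finset ℕ) ∪ ({2} : Finset ℕ) ⊆ Finset.Icc 1 n := by
      intro x hx
      simp only [Finset.mem_union, Finset.mem_insert, Finset.mem_singleton] at hx
      rw [Finset.mem_Icc]; omega
    have he : U.filter (fun A => 1∈A ∧ 3∈A ∧ 2∉A)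
        = ((Finset.Icc 1 n).powersetCard r).filter
            (fun A => ({1,3} : Finset ℕ) ⊆ A ∧ Disjoint ({2} : Finset ℕ) A) := by
      rw [hUeq]
      apply Finset.filter_congr
      intro A _
      simp [Finset.insert_subset_iff, Finset.disjoint_singleton_left]
      tauto
    rw [he, count_aux _ _ _ _ hsub (by decide) (by simp; omega),
      Finset.card_sdiff_of_subset hsub3, Nat.card_Icc]
    congr 1 <;> simp <;> omega
  -- decomposition of ℬ
  have hsplit : ℬ = U.filter (fun A => 2∈A ∧ 3∈A)
      ∪ (U.filter (fun A => 1∈A ∧ 2∈A ∧ 3∉A) ∪ U.filter (fun A => 1∈A ∧ 3∈A ∧ 2∉A)) := by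
    rw [hBdef, Finset.filter_congr (fun A _ => card123 A), Finset.filter_or, Finset.filter_or]
  have d1 : Disjoint (U.filter (fun A => 1∈A ∧ 2∈A ∧ 3∉A))
      (U.filter (fun A => 1∈A ∧ 3∈A ∧ 2∉A)) := by
    rw [Finset.disjoint_left]
    intro A h2 h3
    simp only [Finset.mem_filter] at h2 h3
    tauto
  have d2 : Disjoint (U.filter (fun A => 2∈A ∧ 3∈A))
      (U.filter (fun A => 1∈A ∧ 2∈A ∧ 3∉A) ∪ U.filter (fun A => 1∈A ∧ 3∈A ∧ 2∉A)) := by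
    rw [Finset.disjoint_left]
    intro A h1 h2
    simp only [Finset.mem_union, Finset.mem_filter] at h1 h2
    tauto
  have cardB : ℬ.card = (n-2).choose (r-2) + 2 * (n-3).choose (r-2) := by
    rw [hsplit, Finset.card_union_of_disjoint d2, Finset.card_union_of_disjoint d1, c1, c2, c3]
    ring
  have part3 : (hitting ℬ {2,3,k}).card = (n-2).choose (r-2) + 2 * (n-3).choose (r-2) := by
    rw [hitB, cardB]
  -- star counts
  have hitstar : hitting (_root_.star n r) ({2,3,k} : Finset ℕ)
      = U.filter (fun A => 1∈A ∧ (A ∩ ({2,3,k} : Finset ℕ)).Nonempty) := by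
    unfold hitting _root_.star
    rw [Finset.filter_filter]
  have stot : (U.filter (fun A => 1∈A)).card = (n-1).choose (r-1) := by
    have hsub : ({1} : Finset ℕ) ⊆ Finset.Icc 1 n := by
      intro x hx
      simp only [Finset.mem_singleton] at hx
      rw [Finset.mem_Icc]; omega
    have he : U.filter (fun A => 1∈A)
        = ((Finset.Icc 1 n).powersetCard r).filter
            (fun A => ({1} : Finset ℕ) ⊆ A ∧ Disjoint (∅ : Finset ℕ) A) := by
      rw [hUeq]
      apply Finset.filter_congr
      intro A _
      simp
    rw [he, count_aux _ _ _ _ hsub (by simp) (by simp; omega), Finset.union_empty,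
      Finset.card_sdiff_of_subset hsub, Nat.card_Icc]
    congr 1 <;> simp
  have smiss : (U.filter (fun A => 1∈A ∧ ¬(A ∩ ({2,3,k} : Finset ℕ)).Nonempty)).card
      = (n-4).choose (r-1) := by
    have hsub : ({1} : Finset ℕ) ⊆ Finset.Icc 1 n := by
      intro x hx
      simp only [Finset.mem_singleton] at hx
      rw [Finset.mem_Icc]; omega
    have hsub4 : ({1} : Finset ℕ) ∪ ({2,3,k} : Finset ℕ) ⊆ Finset.Icc 1 n := by
      intro x hx
      simp only [Finset.mem_union, Finset.mem_insert, Finset.mem_singleton] at hx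
      rw [Finset.mem_Icc]; omega
    have hcard4 : (({1} : Finset ℕ) ∪ ({2,3,k} : Finset ℕ)).card = 4 := by
      have hu : ({1} : Finset ℕ) ∪ ({2,3,k} : Finset ℕ) = insert 1 {2,3,k} := by
        ext x; simp; tauto
      rw [hu]
      rw [Finset.card_insert_of_notMem (by simp; omega),
        Finset.card_insert_of_notMem (by simp; omega),
        Finset.card_insert_of_notMem (by simp; omega), Finset.card_singleton]
    have he : U.filter (fun A => 1∈A ∧ ¬(A ∩ ({2,3,k} : Finset ℕ)).Nonempty)
        = ((Finset.Icc 1 n).powersetCard r).filter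
            (fun A => ({1} : Finset ℕ) ⊆ A ∧ Disjoint ({2,3,k} : Finset ℕ) A) := by
      rw [hUeq]
      apply Finset.filter_congr
      intro A _
      rw [Finset.singleton_subset_iff, Finset.not_nonempty_iff_eq_empty,
        ← Finset.disjoint_iff_inter_eq_empty, disjoint_comm]
    rw [he, count_aux _ _ _ _ hsub (by simp; omega) (by simp; omega),
      Finset.card_sdiff_of_subset hsub4, hcard4, Nat.card_Icc]
    congr 1 <;> simp
  have ssplit : (U.filter (fun A => 1∈A)).card
      = (U.filter (fun A => 1∈A ∧ (A ∩ ({2,3,k} : Finset ℕ)).Nonempty)).card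
        + (U.filter (fun A => 1∈A ∧ ¬(A ∩ ({2,3,k} : Finset ℕ)).Nonempty)).card := by
    have he : U.filter (fun A => 1∈A)
        = U.filter (fun A => 1∈A ∧ (A ∩ ({2,3,k} : Finset ℕ)).Nonempty)
          ∪ U.filter (fun A => 1∈A ∧ ¬(A ∩ ({2,3,k} : Finset ℕ)).Nonempty) := by
      rw [← Finset.filter_or]
      apply Finset.filter_congr
      intro A _
      tauto
    rw [he, Finset.card_union_of_disjoint]
    rw [Finset.disjoint_left]
    intro A h1 h2
    simp only [Finset.mem_filter] at h1 h2
    tauto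
  -- the key inequality
  have key := pascal_ineq (n-4) (r-3) (by omega)
  rw [show n-4+3 = n-1 from by omega, show n-4+2 = n-2 from by omega,
    show n-4+1 = n-3 from by omega, show r-3+2 = r-1 from by omega,
    show r-3+1 = r-2 from by omega] at key
  have hlt : (hitting (_root_.star n r) ({2,3,k} : Finset ℕ)).card < (hitting ℬ {2,3,k}).card := by
    rw [hitstar, part3]
    omega
  refine ⟨hLC, hInt, part3, hlt, ?_⟩
  intro hg
  exact absurd (hg ℬ (Finset.filter_subset _ _) hLC hInt) (not_le.mpr hlt)
end

section
/- Let r ≥ 3, n ≥ 2r, and X = {3, j} with r + 2 ≤ j ≤ n. Let ℬ = {A ∈ [n]^(r) : |A ∩ {1,2,3}| ≥ 2}. Then |ℬ(X)| = C(n−2, r−2) + C(n−3, r−2) + C(n−4, r−3) > C(n−2, r−2) + C(n−3, r−2) = |𝒮(X)|, where 𝒮 is the star at 1. Hence {3, j} is not good. -/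
open Finset

lemma count_aux_s15 (S T U : Finset ℕ) (r : ℕ) (hTS : T ⊆ S) (hTU : Disjoint T U)
    (hT : T.card ≤ r) :
    ((S.powersetCard r).filter (fun A => T ⊆ A ∧ Disjoint A U)).card
      = (S \ (T ∪ U)).card.choose (r - T.card) := by
  rw [← Finset.card_powersetCard]
  apply Finset.card_bij' (fun A _ => A \ T) (fun B _ => B ∪ T)
  · intro A hA
    simp only [mem_filter, mem_powersetCard] at hA ⊢
    obtain ⟨⟨hAS, hAc⟩, hTA, hAU⟩ := hA
    constructor
    · intro x hx
      simp only [mem_sdiff, mem_union] at hx ⊢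
      exact ⟨hAS hx.1, by rintro (h | h); exact hx.2 h; exact absurd (hAU.le_bot (by simp [hx.1, h] : x ∈ A ⊓ U)) (by simp)⟩
    · rw [card_sdiff_of_subset hTA, hAc]
  · intro B hB
    simp only [mem_powersetCard] at hB
    obtain ⟨hBS, hBc⟩ := hB
    have hBT : Disjoint B T := by
      refine disjoint_left.2 fun x hx hxT => ?_
      have := hBS hx; simp [mem_sdiff, mem_union, hxT] at this
    have hBU : Disjoint B U := by
      refine disjoint_left.2 fun x hx hxU => ?_
      have := hBS hx; simp [mem_sdiff, mem_union, hxU] at this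
    simp only [mem_filter, mem_powersetCard]
    refine ⟨⟨union_subset (fun x hx => (mem_sdiff.1 (hBS hx)).1) hTS, ?_⟩,
      subset_union_right, disjoint_union_left.2 ⟨hBU, hTU⟩⟩
    rw [card_union_of_disjoint hBT, hBc]
    omega
  · intro A hA
    simp only [mem_filter] at hA
    exact sdiff_union_of_subset hA.2.1
  · intro B hB
    simp only [mem_powersetCard] at hB
    apply union_sdiff_cancel_right
    refine disjoint_left.2 fun x hx hxT => ?_
    have := hB.1 hx; simp [mem_sdiff, mem_union, hxT] at this

lemma card_inter_123 (A : Finset ℕ) :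
    2 ≤ (A ∩ {1,2,3}).card ↔ (1∈A∧2∈A)∨(1∈A∧3∈A)∨(2∈A∧3∈A) := by
  rw [Finset.inter_comm, ← Finset.filter_mem_eq_inter]
  by_cases h1 : (1:ℕ) ∈ A <;> by_cases h2 : (2:ℕ) ∈ A <;> by_cases h3 : (3:ℕ) ∈ A <;>
    simp [Finset.filter_insert, Finset.filter_singleton, h1, h2, h3]


lemma hitting_B_eq (n r j : ℕ) (hj5 : 5 ≤ j) :
    hitting ((uniformOn n r).filter (fun A => 2 ≤ (A ∩ {1, 2, 3}).card)) {3, j} =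
      ((Icc 1 n).powersetCard r).filter (fun A => ({1,3}:Finset ℕ) ⊆ A ∧ Disjoint A ∅) ∪
      (((Icc 1 n).powersetCard r).filter (fun A => ({2,3}:Finset ℕ) ⊆ A ∧ Disjoint A {1}) ∪
       ((Icc 1 n).powersetCard r).filter (fun A => ({1,2,j}:Finset ℕ) ⊆ A ∧ Disjoint A {3})) := by
  ext A
  simp only [hitting, uniformOn, mem_filter, mem_union, card_inter_123, insert_subset_iff,
    singleton_subset_iff, disjoint_singleton_right, disjoint_empty_right, and_true,
    Finset.Nonempty, mem_inter, mem_insert, mem_singleton]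
  constructor
  · rintro ⟨⟨hA, hcard⟩, x, hxA, rfl | rfl⟩ <;> tauto
  · rintro (⟨hA, h1, h3⟩ | ⟨hA, ⟨h2, h3⟩, h1⟩ | ⟨hA, ⟨h1, h2, hjA⟩, h3⟩)
    · exact ⟨⟨hA, by tauto⟩, 3, h3, by tauto⟩
    · exact ⟨⟨hA, by tauto⟩, 3, h3, by tauto⟩
    · exact ⟨⟨hA, by tauto⟩, j, hjA, by tauto⟩

lemma hitting_star_eq (n r j : ℕ) (hj5 : 5 ≤ j) :
    hitting (star n r) {3, j} =
      ((Icc 1 n).powersetCard r).filter (fun A => ({1,3}:Finset ℕ) ⊆ A ∧ Disjoint A ∅) ∪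
      ((Icc 1 n).powersetCard r).filter (fun A => ({1,j}:Finset ℕ) ⊆ A ∧ Disjoint A {3}) := by
  ext A
  unfold hitting _root_.star uniformOn
  simp only [mem_filter, mem_union, insert_subset_iff,
    singleton_subset_iff, disjoint_singleton_right, disjoint_empty_right, and_true,
    Finset.Nonempty, mem_inter, mem_insert, mem_singleton]
  constructor
  · rintro ⟨⟨hA, h1⟩, x, hxA, rfl | rfl⟩
    · tauto
    · by_cases h3 : (3:ℕ) ∈ A <;> tauto
  · rintro (⟨hA, h1, h3⟩ | ⟨hA, ⟨h1, hjA⟩, h3⟩)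
    · exact ⟨⟨hA, h1⟩, 3, h3, by tauto⟩
    · exact ⟨⟨hA, h1⟩, j, hjA, by tauto⟩

lemma isInter_B (n r : ℕ) :
    IsIntersecting ((uniformOn n r).filter (fun A => 2 ≤ (A ∩ {1, 2, 3}).card)) := by
  intro A hA B hB
  simp only [mem_filter] at hA hB
  have key : ((A ∩ {1,2,3}) ∩ (B ∩ {1,2,3})).Nonempty := by
    rw [← card_pos]
    have hu : ((A ∩ {1,2,3}) ∪ (B ∩ {1,2,3})).card ≤ 3 := by
      have hsub : (A ∩ {1,2,3}) ∪ (B ∩ {1,2,3}) ⊆ ({1,2,3} : Finset ℕ) :=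
        union_subset inter_subset_right inter_subset_right
      calc _ ≤ ({1,2,3}:Finset ℕ).card := card_le_card hsub
        _ = 3 := rfl
    have := Finset.card_inter_add_card_union (A ∩ {1,2,3}) (B ∩ {1,2,3})
    have h1 := hA.2; have h2 := hB.2
    omega
  obtain ⟨x, hx⟩ := key
  simp only [mem_inter] at hx
  exact ⟨x, mem_inter.2 ⟨hx.1.1, hx.2.1⟩⟩

lemma lc_B (n r : ℕ) :
    LeftCompressed ((uniformOn n r).filter (fun A => 2 ≤ (A ∩ {1, 2, 3}).card)) := by
  intro i k hi hik
  set ℬ := (uniformOn n r).filter (fun A => 2 ≤ (A ∩ {1, 2, 3}).card) with hBdef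
  have key : ∀ A ∈ ℬ, comp i k A ∈ ℬ := by
    intro A hA
    unfold comp
    split_ifs with h
    · simp only [hBdef, mem_filter, uniformOn, mem_powersetCard] at hA ⊢
      obtain ⟨⟨hAS, hAc⟩, hAT⟩ := hA
      have hkA := h.1; have hiA := h.2
      have hkn : k ≤ n := (mem_Icc.1 (hAS hkA)).2
      refine ⟨⟨?_, ?_⟩, ?_⟩
      · intro x hx
        rcases mem_insert.1 hx with rfl | hx
        · exact mem_Icc.2 ⟨hi, by omega⟩
        · exact hAS (erase_subset _ _ hx)
      · rw [card_insert_of_notMem (fun hc => hiA (erase_subset _ _ hc)),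
          card_erase_of_mem hkA]
        have : 1 ≤ A.card := card_pos.2 ⟨k, hkA⟩
        omega
      · by_cases hk3 : k ∈ ({1,2,3} : Finset ℕ)
        · have hi3 : i ∈ ({1,2,3} : Finset ℕ) := by
            simp only [mem_insert, mem_singleton] at hk3 ⊢
            omega
          rw [insert_inter_of_mem hi3, erase_inter,
            card_insert_of_notMem (fun hc => hiA (mem_inter.1 (mem_of_mem_erase hc)).1),
            card_erase_of_mem (mem_inter.2 ⟨hkA, hk3⟩)]
          omega
        · refine le_trans hAT (card_le_card ?_)
          intro x hx
          have hx' := mem_inter.1 hx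
          exact mem_inter.2 ⟨mem_insert_of_mem
            (mem_erase.2 ⟨fun hxk => hk3 (hxk ▸ hx'.2), hx'.1⟩), hx'.2⟩
    · exact hA
  unfold compFam
  rw [filter_true_of_mem key, filter_false_of_mem (fun A hA hc => hc (key A hA)),
    image_empty, union_empty]

lemma cardB (n r j : ℕ) (hr : 3 ≤ r) (hn : 2 * r ≤ n) (hj : r + 2 ≤ j) (hjn : j ≤ n) :
    (hitting ((uniformOn n r).filter (fun A => 2 ≤ (A ∩ {1, 2, 3}).card)) {3, j}).card =
      Nat.choose (n - 2) (r - 2) + Nat.choose (n - 3) (r - 2) + Nat.choose (n - 4) (r - 3) := by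
  have hn6 : 6 ≤ n := by omega
  have hIc : (Icc 1 n).card = n := by rw [Nat.card_Icc]; omega
  -- component 1
  have hT1 : ({1,3} : Finset ℕ).card = 2 := rfl
  have hT1S : ({1,3} : Finset ℕ) ⊆ Icc 1 n := by
    intro x hx
    simp only [mem_insert, mem_singleton] at hx
    rcases hx with rfl | rfl <;> exact mem_Icc.2 (by omega)
  have c1 : (((Icc 1 n).powersetCard r).filter
      (fun A => ({1,3}:Finset ℕ) ⊆ A ∧ Disjoint A ∅)).card = (n-2).choose (r-2) := by
    rw [count_aux_s15 _ _ _ _ hT1S (disjoint_empty_right _) (by omega)]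
    have hS : (Icc 1 n \ ({1,3} ∪ ∅)).card = n - 2 := by
      rw [union_empty, card_sdiff_of_subset hT1S, hIc, hT1]
    rw [hS, hT1]
  -- component 2
  have hT2 : ({2,3} : Finset ℕ).card = 2 := rfl
  have hU2 : (({2,3} : Finset ℕ) ∪ {1}).card = 3 := rfl
  have hT2S : ({2,3} : Finset ℕ) ⊆ Icc 1 n := by
    intro x hx
    simp only [mem_insert, mem_singleton] at hx
    rcases hx with rfl | rfl <;> exact mem_Icc.2 (by omega)
  have hU2S : (({2,3} : Finset ℕ) ∪ {1}) ⊆ Icc 1 n := by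
    intro x hx
    simp only [mem_union, mem_insert, mem_singleton] at hx
    rcases hx with (rfl | rfl) | rfl <;> exact mem_Icc.2 (by omega)
  have c2 : (((Icc 1 n).powersetCard r).filter
      (fun A => ({2,3}:Finset ℕ) ⊆ A ∧ Disjoint A {1})).card = (n-3).choose (r-2) := by
    rw [count_aux_s15 _ _ _ _ hT2S (by simp) (by omega)]
    have hS : (Icc 1 n \ ({2,3} ∪ {1})).card = n - 3 := by
      rw [card_sdiff_of_subset hU2S, hIc, hU2]
    rw [hS, hT2]
  -- component 3
  have hj1 : j ≠ 1 := by omega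
  have hj2 : j ≠ 2 := by omega
  have hj3 : j ≠ 3 := by omega
  have hT3 : ({1,2,j} : Finset ℕ).card = 3 := by
    rw [card_insert_of_notMem (by simp [hj1.symm]),
      card_insert_of_notMem (by simp [hj2.symm]), card_singleton]
  have hU3 : (({1,2,j} : Finset ℕ) ∪ {3}).card = 4 := by
    rw [card_union_of_disjoint (by simp [hj3]; omega), hT3, card_singleton]
  have hT3S : ({1,2,j} : Finset ℕ) ⊆ Icc 1 n := by
    intro x hx
    simp only [mem_insert, mem_singleton] at hx
    rcases hx with rfl | rfl | rfl <;> exact mem_Icc.2 (by omega)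
  have hU3S : (({1,2,j} : Finset ℕ) ∪ {3}) ⊆ Icc 1 n := by
    intro x hx
    simp only [mem_union, mem_insert, mem_singleton] at hx
    rcases hx with (rfl | rfl | rfl) | rfl <;> exact mem_Icc.2 (by omega)
  have c3 : (((Icc 1 n).powersetCard r).filter
      (fun A => ({1,2,j}:Finset ℕ) ⊆ A ∧ Disjoint A {3})).card = (n-4).choose (r-3) := by
    rw [count_aux_s15 _ _ _ _ hT3S (by simp [hj3]; omega) (by omega)]
    have hS : (Icc 1 n \ ({1,2,j} ∪ {3})).card = n - 4 := by
      rw [card_sdiff_of_subset hU3S, hIc, hU3]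
    rw [hS, hT3]
  have d23 : Disjoint (((Icc 1 n).powersetCard r).filter
      (fun A => ({2,3}:Finset ℕ) ⊆ A ∧ Disjoint A {1}))
      (((Icc 1 n).powersetCard r).filter
      (fun A => ({1,2,j}:Finset ℕ) ⊆ A ∧ Disjoint A {3})) := by
    refine disjoint_left.2 fun A hA hA' => ?_
    simp only [mem_filter, insert_subset_iff, singleton_subset_iff,
      disjoint_singleton_right] at hA hA'
    tauto
  have d123 : Disjoint (((Icc 1 n).powersetCard r).filter
      (fun A => ({1,3}:Finset ℕ) ⊆ A ∧ Disjoint A ∅))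
      ((((Icc 1 n).powersetCard r).filter (fun A => ({2,3}:Finset ℕ) ⊆ A ∧ Disjoint A {1})) ∪
       (((Icc 1 n).powersetCard r).filter (fun A => ({1,2,j}:Finset ℕ) ⊆ A ∧ Disjoint A {3}))) := by
    refine disjoint_left.2 fun A hA hA' => ?_
    rw [mem_union] at hA'
    rcases hA' with hA' | hA' <;>
    · simp only [mem_filter, insert_subset_iff, singleton_subset_iff,
        disjoint_singleton_right, disjoint_empty_right] at hA hA'
      tauto
  rw [hitting_B_eq n r j (by omega), card_union_of_disjoint d123,
    card_union_of_disjoint d23, c1, c2, c3]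
  omega

lemma cardS (n r j : ℕ) (hr : 3 ≤ r) (hn : 2 * r ≤ n) (hj : r + 2 ≤ j) (hjn : j ≤ n) :
    (hitting (star n r) {3, j}).card =
      Nat.choose (n - 2) (r - 2) + Nat.choose (n - 3) (r - 2) := by
  have hn6 : 6 ≤ n := by omega
  have hIc : (Icc 1 n).card = n := by rw [Nat.card_Icc]; omega
  have hT1 : ({1,3} : Finset ℕ).card = 2 := rfl
  have hT1S : ({1,3} : Finset ℕ) ⊆ Icc 1 n := by
    intro x hx
    simp only [mem_insert, mem_singleton] at hx
    rcases hx with rfl | rfl <;> exact mem_Icc.2 (by omega)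
  have c1 : (((Icc 1 n).powersetCard r).filter
      (fun A => ({1,3}:Finset ℕ) ⊆ A ∧ Disjoint A ∅)).card = (n-2).choose (r-2) := by
    rw [count_aux_s15 _ _ _ _ hT1S (disjoint_empty_right _) (by omega)]
    have hS : (Icc 1 n \ ({1,3} ∪ ∅)).card = n - 2 := by
      rw [union_empty, card_sdiff_of_subset hT1S, hIc, hT1]
    rw [hS, hT1]
  have hj1 : j ≠ 1 := by omega
  have hj3 : j ≠ 3 := by omega
  have hT2 : ({1,j} : Finset ℕ).card = 2 := by
    rw [card_insert_of_notMem (by simp [hj1.symm]), card_singleton]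
  have hU2 : (({1,j} : Finset ℕ) ∪ {3}).card = 3 := by
    rw [card_union_of_disjoint (by simp [hj3]; omega), hT2, card_singleton]
  have hU2S : (({1,j} : Finset ℕ) ∪ {3}) ⊆ Icc 1 n := by
    intro x hx
    simp only [mem_union, mem_insert, mem_singleton] at hx
    rcases hx with (rfl | rfl) | rfl <;> exact mem_Icc.2 (by omega)
  have hT2S : ({1,j} : Finset ℕ) ⊆ Icc 1 n := by
    intro x hx
    simp only [mem_insert, mem_singleton] at hx
    rcases hx with rfl | rfl <;> exact mem_Icc.2 (by omega)
  have c2 : (((Icc 1 n).powersetCard r).filter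
      (fun A => ({1,j}:Finset ℕ) ⊆ A ∧ Disjoint A {3})).card = (n-3).choose (r-2) := by
    rw [count_aux_s15 _ _ _ _ hT2S (by simp [hj3]; omega) (by omega)]
    have hS : (Icc 1 n \ ({1,j} ∪ {3})).card = n - 3 := by
      rw [card_sdiff_of_subset hU2S, hIc, hU2]
    rw [hS, hT2]
  have d12 : Disjoint (((Icc 1 n).powersetCard r).filter
      (fun A => ({1,3}:Finset ℕ) ⊆ A ∧ Disjoint A ∅))
      (((Icc 1 n).powersetCard r).filter
      (fun A => ({1,j}:Finset ℕ) ⊆ A ∧ Disjoint A {3})) := by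
    refine disjoint_left.2 fun A hA hA' => ?_
    simp only [mem_filter, insert_subset_iff, singleton_subset_iff,
      disjoint_singleton_right, disjoint_empty_right] at hA hA'
    tauto
  rw [hitting_star_eq n r j (by omega), card_union_of_disjoint d12, c1, c2]

theorem stmt15 (n r j : ℕ) (hr : 3 ≤ r) (hn : 2 * r ≤ n) (hj : r + 2 ≤ j)
    (hjn : j ≤ n) :
    (hitting ((uniformOn n r).filter (fun A => 2 ≤ (A ∩ {1, 2, 3}).card)) {3, j}).card =
      Nat.choose (n - 2) (r - 2) + Nat.choose (n - 3) (r - 2) + Nat.choose (n - 4) (r - 3) ∧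
    (hitting (star n r) {3, j}).card = Nat.choose (n - 2) (r - 2) + Nat.choose (n - 3) (r - 2) ∧
    (hitting (star n r) {3, j}).card <
      (hitting ((uniformOn n r).filter (fun A => 2 ≤ (A ∩ {1, 2, 3}).card)) {3, j}).card ∧
    ¬ IsGood n r {3, j} := by
  have hB := cardB n r j hr hn hj hjn
  have hS := cardS n r j hr hn hj hjn
  have hpos : 0 < (n - 4).choose (r - 3) := Nat.choose_pos (by omega)
  have hlt : (hitting (star n r) {3, j}).card <
      (hitting ((uniformOn n r).filter (fun A => 2 ≤ (A ∩ {1, 2, 3}).card)) {3, j}).card := by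
    rw [hB, hS]; omega
  refine ⟨hB, hS, hlt, fun hg => ?_⟩
  have := hg _ (filter_subset _ _) (lc_B n r) (isInter_B n r)
  omega
end

section
/- If X ⊆ [2,n] is good for n and r, and X ≤ X' (componentwise domination: |X| = |X'| and the i-th smallest element of X is at most that of X'), then X' is good for n and r. -/
open Finset

lemma comp_mem {𝒜 : Finset (Finset ℕ)} (hlc : LeftCompressed 𝒜) {i j : ℕ}
    (hi : 1 ≤ i) (hij : i < j) {A : Finset ℕ} (hA : A ∈ 𝒜) : comp i j A ∈ 𝒜 := by
  by_contra h
  have h1 : comp i j A ∈ compFam i j 𝒜 :=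
    Finset.mem_union_right _ (Finset.mem_image_of_mem _ (Finset.mem_filter.mpr ⟨hA, h⟩))
  rw [hlc i j hi hij] at h1
  exact h h1

lemma step (n r : ℕ) (X : Finset ℕ) (x y : ℕ) (hxX : x ∉ X) (hyX : y ∉ X)
    (hxy : x < y) (hx2 : 2 ≤ x) (hyn : y ≤ n)
    (hgood : IsGood n r (insert x X)) : IsGood n r (insert y X) := by
  intro 𝒜 hsub hlc hint
  set X0 := insert x X with hX0
  set X1 := insert y X with hX1
  have hxy' : x ≠ y := hxy.ne
  have hx1 : (1:ℕ) ≤ x := by omega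
  -- facts about members of hitting 𝒜 X1 \ hitting 𝒜 X0
  have hfact1 : ∀ A ∈ hitting 𝒜 X1 \ hitting 𝒜 X0,
      A ∈ 𝒜 ∧ y ∈ A ∧ x ∉ A ∧ A ∩ X0 = ∅ := by
    intro A hA
    rw [Finset.mem_sdiff, hitting, hitting, Finset.mem_filter, Finset.mem_filter] at hA
    obtain ⟨⟨hA𝒜, hAX1⟩, hnot⟩ := hA
    have hempty : A ∩ X0 = ∅ := by
      by_contra h
      exact hnot ⟨hA𝒜, Finset.nonempty_iff_ne_empty.mpr h⟩
    have hxA : x ∉ A := by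
      intro hx
      have : x ∈ A ∩ X0 := Finset.mem_inter.mpr ⟨hx, Finset.mem_insert_self _ _⟩
      simp [hempty] at this
    have hyA : y ∈ A := by
      obtain ⟨z, hz⟩ := hAX1
      rw [Finset.mem_inter, hX1, Finset.mem_insert] at hz
      rcases hz.2 with h | h
      · exact h ▸ hz.1
      · exfalso
        have : z ∈ A ∩ X0 := Finset.mem_inter.mpr ⟨hz.1, Finset.mem_insert_of_mem h⟩
        simp [hempty] at this
    exact ⟨hA𝒜, hyA, hxA, hempty⟩
  have claim1 : (hitting 𝒜 X1 \ hitting 𝒜 X0).card ≤ (hitting 𝒜 X0 \ hitting 𝒜 X1).card := by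
    apply Finset.card_le_card_of_injOn (fun A => insert x (A.erase y))
    · intro A hA
      obtain ⟨hA𝒜, hyA, hxA, hempty⟩ := hfact1 A hA
      have hcomp : comp x y A = insert x (A.erase y) := if_pos ⟨hyA, hxA⟩
      have hmem : insert x (A.erase y) ∈ 𝒜 := hcomp ▸ comp_mem hlc hx1 hxy hA𝒜
      rw [Finset.mem_coe, Finset.mem_sdiff, hitting, hitting, Finset.mem_filter, Finset.mem_filter]
      refine ⟨⟨hmem, ⟨x, Finset.mem_inter.mpr ⟨Finset.mem_insert_self _ _, Finset.mem_insert_self _ _⟩⟩⟩, ?_⟩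
      rintro ⟨-, z, hz⟩
      rw [Finset.mem_inter, Finset.mem_insert, Finset.mem_erase] at hz
      rcases hz.1 with h | h
      · subst h
        rw [hX1, Finset.mem_insert] at hz
        rcases hz.2 with h | h
        · exact hxy' h
        · exact hxX h
      · have hzX0 : z ∈ X0 := by
          rw [hX0, Finset.mem_insert]
          rw [hX1, Finset.mem_insert] at hz
          rcases hz.2 with h' | h'
          · exact absurd h' h.1
          · exact Or.inr h'
        have : z ∈ A ∩ X0 := Finset.mem_inter.mpr ⟨h.2, hzX0⟩
        simp [hempty] at this
    · intro A hA B hB hAB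
      obtain ⟨-, hyA, hxA, -⟩ := hfact1 A hA
      obtain ⟨-, hyB, hxB, -⟩ := hfact1 B hB
      have hxA' : x ∉ A.erase y := fun h => hxA (Finset.mem_of_mem_erase h)
      have hxB' : x ∉ B.erase y := fun h => hxB (Finset.mem_of_mem_erase h)
      have : A.erase y = B.erase y := by
        have := congrArg (Finset.erase · x) hAB
        simpa [Finset.erase_insert hxA', Finset.erase_insert hxB'] using this
      calc A = insert y (A.erase y) := (Finset.insert_erase hyA).symm
        _ = insert y (B.erase y) := by rw [this]
        _ = B := Finset.insert_erase hyB
  -- star facts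
  have hfact2 : ∀ A ∈ hitting (star n r) X0 \ hitting (star n r) X1,
      A ∈ star n r ∧ x ∈ A ∧ y ∉ A ∧ A ∩ X1 = ∅ := by
    intro A hA
    rw [Finset.mem_sdiff, hitting, hitting, Finset.mem_filter, Finset.mem_filter] at hA
    obtain ⟨⟨hAs, hAX0⟩, hnot⟩ := hA
    have hempty : A ∩ X1 = ∅ := by
      by_contra h
      exact hnot ⟨hAs, Finset.nonempty_iff_ne_empty.mpr h⟩
    have hyA : y ∉ A := by
      intro hy
      have : y ∈ A ∩ X1 := Finset.mem_inter.mpr ⟨hy, Finset.mem_insert_self _ _⟩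
      simp [hempty] at this
    have hxA : x ∈ A := by
      obtain ⟨z, hz⟩ := hAX0
      rw [Finset.mem_inter, hX0, Finset.mem_insert] at hz
      rcases hz.2 with h | h
      · exact h ▸ hz.1
      · exfalso
        have : z ∈ A ∩ X1 := Finset.mem_inter.mpr ⟨hz.1, Finset.mem_insert_of_mem h⟩
        simp [hempty] at this
    exact ⟨hAs, hxA, hyA, hempty⟩
  have claim2 : (hitting (star n r) X0 \ hitting (star n r) X1).card ≤
      (hitting (star n r) X1 \ hitting (star n r) X0).card := by
    apply Finset.card_le_card_of_injOn (fun A => insert y (A.erase x))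
    · intro A hA
      obtain ⟨hAs, hxA, hyA, hempty⟩ := hfact2 A hA
      simp only [_root_.star, uniformOn, Finset.mem_filter, Finset.mem_powersetCard] at hAs
      obtain ⟨⟨hAsub, hAcard⟩, h1A⟩ := hAs
      have hyA' : y ∉ A.erase x := fun h => hyA (Finset.mem_of_mem_erase h)
      have hnew : insert y (A.erase x) ∈ star n r := by
        simp only [_root_.star, uniformOn, Finset.mem_filter, Finset.mem_powersetCard]
        refine ⟨⟨?_, ?_⟩, ?_⟩
        · intro z hz
          rw [Finset.mem_insert] at hz
          rcases hz with h | h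
          · subst h; exact Finset.mem_Icc.mpr ⟨by omega, hyn⟩
          · exact hAsub (Finset.mem_of_mem_erase h)
        · rw [Finset.card_insert_of_notMem hyA', Finset.card_erase_of_mem hxA, hAcard]
          have : 1 ≤ r := by
            rw [← hAcard]
            exact Finset.card_pos.mpr ⟨x, hxA⟩
          omega
        · exact Finset.mem_insert_of_mem (Finset.mem_erase.mpr ⟨by omega, h1A⟩)
      rw [Finset.mem_coe, Finset.mem_sdiff, hitting, hitting, Finset.mem_filter, Finset.mem_filter]
      refine ⟨⟨hnew, ⟨y, Finset.mem_inter.mpr ⟨Finset.mem_insert_self _ _, Finset.mem_insert_self _ _⟩⟩⟩, ?_⟩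
      rintro ⟨-, z, hz⟩
      rw [Finset.mem_inter, Finset.mem_insert, Finset.mem_erase] at hz
      rcases hz.1 with h | h
      · subst h
        rw [hX0, Finset.mem_insert] at hz
        rcases hz.2 with h | h
        · exact hxy' h.symm
        · exact hyX h
      · have hzX1 : z ∈ X1 := by
          rw [hX1, Finset.mem_insert]
          rw [hX0, Finset.mem_insert] at hz
          rcases hz.2 with h' | h'
          · exact absurd h' h.1
          · exact Or.inr h'
        have : z ∈ A ∩ X1 := Finset.mem_inter.mpr ⟨h.2, hzX1⟩
        simp [hempty] at this
    · intro A hA B hB hAB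
      obtain ⟨-, hxA, hyA, -⟩ := hfact2 A hA
      obtain ⟨-, hxB, hyB, -⟩ := hfact2 B hB
      have hyA' : y ∉ A.erase x := fun h => hyA (Finset.mem_of_mem_erase h)
      have hyB' : y ∉ B.erase x := fun h => hyB (Finset.mem_of_mem_erase h)
      have : A.erase x = B.erase x := by
        have := congrArg (Finset.erase · y) hAB
        simpa [Finset.erase_insert hyA', Finset.erase_insert hyB'] using this
      calc A = insert x (A.erase x) := (Finset.insert_erase hxA).symm
        _ = insert x (B.erase x) := by rw [this]
        _ = B := Finset.insert_erase hxB
  have e1 := Finset.card_inter_add_card_sdiff (hitting 𝒜 X1) (hitting 𝒜 X0)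
  have e2 := Finset.card_inter_add_card_sdiff (hitting 𝒜 X0) (hitting 𝒜 X1)
  have e3 := Finset.card_inter_add_card_sdiff (hitting (star n r) X0) (hitting (star n r) X1)
  have e4 := Finset.card_inter_add_card_sdiff (hitting (star n r) X1) (hitting (star n r) X0)
  rw [Finset.inter_comm] at e2 e4
  have hmid : (hitting 𝒜 X0).card ≤ (hitting (star n r) X0).card := hgood 𝒜 hsub hlc hint
  omega

lemma listGood (n r : ℕ) : ∀ (a b : List ℕ), List.Forall₂ (· ≤ ·) a b →
    a.Pairwise (· > ·) → b.Pairwise (· > ·) →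
    (∀ z ∈ a, 2 ≤ z) → (∀ z ∈ b, z ≤ n) →
    ∀ S : Finset ℕ, (∀ s ∈ S, ∀ z ∈ b, z < s) →
    IsGood n r (a.toFinset ∪ S) → IsGood n r (b.toFinset ∪ S) := by
  intro a b hf
  induction hf with
  | nil => intro _ _ _ _ S _ h; exact h
  | @cons x y a b hxy hf ih =>
    intro hpa hpb ha2 hbn S hS hgood
    rw [List.pairwise_cons] at hpa hpb
    have key : IsGood n r (insert y (a.toFinset ∪ S)) := by
      rcases eq_or_lt_of_le hxy with h | h
      · subst h
        simpa [Finset.insert_union] using hgood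
      · apply step n r (a.toFinset ∪ S) x y _ _ h (ha2 x (List.mem_cons_self))
          (hbn y (List.mem_cons_self))
        · simpa [Finset.insert_union] using hgood
        · rw [Finset.mem_union]
          rintro (hx | hx)
          · rw [List.mem_toFinset] at hx
            exact absurd (hpa.1 x hx) (lt_irrefl x)
          · have := hS x hx y (List.mem_cons_self); omega
        · rw [Finset.mem_union]
          rintro (hy | hy)
          · rw [List.mem_toFinset] at hy
            have h1 := hpa.1 y hy
            omega
          · exact absurd (hS y hy y (List.mem_cons_self)) (lt_irrefl y)
    have := ih hpa.2 hpb.2 (fun z hz => ha2 z (List.mem_cons_of_mem _ hz))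
      (fun z hz => hbn z (List.mem_cons_of_mem _ hz)) (insert y S)
      ?_ ?_
    · simpa [Finset.union_insert, Finset.insert_union, List.toFinset_cons] using this
    · intro s hs z hz
      rw [Finset.mem_insert] at hs
      rcases hs with h | h
      · subst h; exact hpb.1 z hz
      · exact hS s h z (List.mem_cons_of_mem _ hz)
    · rw [Finset.union_insert]
      exact key

theorem stmt16 (n r : ℕ) (hr : 2 ≤ r) (hn : 2 * r ≤ n) (X Xp : Finset ℕ)
    (hX : X ⊆ Icc 2 n) (hXp : Xp ⊆ Icc 2 n) (hgood : IsGood n r X)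
    (hle : domLE X Xp) : IsGood n r Xp := by
  obtain ⟨hcard, hpt⟩ := hle
  have hlen : (X.sort (· ≤ ·)).length = (Xp.sort (· ≤ ·)).length := by
    rw [Finset.length_sort, Finset.length_sort, hcard]
  have hf : List.Forall₂ (· ≤ ·) (X.sort (· ≤ ·)) (Xp.sort (· ≤ ·)) := by
    rw [List.forall₂_iff_get]
    refine ⟨hlen, fun i h1 h2 => ?_⟩
    exact hpt i _ _ (List.getElem?_eq_getElem h1) (List.getElem?_eq_getElem h2)
  have hf' : List.Forall₂ (· ≤ ·) (X.sort (· ≤ ·)).reverse (Xp.sort (· ≤ ·)).reverse :=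
    List.rel_reverse hf
  have h := listGood n r (X.sort (· ≤ ·)).reverse (Xp.sort (· ≤ ·)).reverse hf'
    (List.pairwise_reverse.mpr (Finset.sortedLT_sort X).pairwise)
    (List.pairwise_reverse.mpr (Finset.sortedLT_sort Xp).pairwise)
    (fun z hz => by
      rw [List.mem_reverse, Finset.mem_sort] at hz
      exact (Finset.mem_Icc.mp (hX hz)).1)
    (fun z hz => by
      rw [List.mem_reverse, Finset.mem_sort] at hz
      exact (Finset.mem_Icc.mp (hXp hz)).2)
    ∅ (by simp)
  simp only [List.toFinset_reverse, Finset.sort_toFinset, Finset.union_empty] at h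
  exact h hgood
end
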